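/- arXiv:1907.06634 — 9 statements merged into one kernel-verified Lean document; each statement's English description precedes it below -/
import Mathlib

section
/- Let X, Y : (0,∞) → ℂ, let H, ω ∈ ℝ and γ̄ > 0, and suppose that t ↦ e^{(H+iω)t} X(e^{−t}γ̄) and t ↦ e^{(H+iω)t} Y(e^{−t}γ̄) are both Lebesgue integrable on ℝ, so that the Lamperti dilation spectrums X̃(ω, γ̄) and Ỹ(ω, γ̄) exist. If X̃(ω, γ̄) = Ỹ(ω, γ̄) ≠ 0, then for all dilations λ₁, λ₂ > 0, X̃(ω, λ₁γ̄) / Ỹ(ω, λ₂γ̄) = (λ₁/λ₂)^{H+iω}, where the complex power is taken of the positive real λ₁/λ₂. -/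
open MeasureTheory

lemma lds_scale (Z : ℝ → ℂ) (s : ℂ) (γbar lam : ℝ) (hlam : 0 < lam) :
    (∫ t : ℝ, Complex.exp (s * (t : ℂ)) * Z (Real.exp (-t) * (lam * γbar)))
      = Complex.exp (s * Real.log lam) *
        ∫ t : ℝ, Complex.exp (s * (t : ℂ)) * Z (Real.exp (-t) * γbar) := by
  have h1 : (∫ t : ℝ, Complex.exp (s * ((t : ℂ) + (Real.log lam : ℂ))) *
      Z (Real.exp (-t) * γbar))
      = ∫ t : ℝ, Complex.exp (s * (t : ℂ)) * Z (Real.exp (-t) * (lam * γbar)) := by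
    rw [← integral_sub_right_eq_self
      (fun t : ℝ => Complex.exp (s * ((t : ℂ) + (Real.log lam : ℂ))) *
        Z (Real.exp (-t) * γbar)) (Real.log lam)]
    congr 1
    ext t
    have : Real.exp (-(t - Real.log lam)) * γbar = Real.exp (-t) * (lam * γbar) := by
      rw [neg_sub, Real.exp_sub]
      rw [Real.exp_log hlam]
      ring_nf
      rw [Real.exp_neg]
      ring
    rw [this]
    push_cast
    ring_nf
  rw [← h1]
  rw [← integral_const_mul]
  congr 1; ext t
  rw [mul_add, Complex.exp_add]; ring


/-- **Similarity between Lamperti dilation spectrums.**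
If the Lamperti dilation spectrums of two average performance measures `X`, `Y`
exist at `γ̄` and coincide (with nonzero common value), then for all dilations
`λ₁, λ₂ > 0` one has `X̃(ω, λ₁γ̄) / Ỹ(ω, λ₂γ̄) = (λ₁/λ₂)^{H+iω}`. -/
theorem lamperti_dilation_spectrum_similarity
    (X Y : ℝ → ℂ) (H ω γbar : ℝ) (hγ : 0 < γbar)
    (hX : Integrable (fun t : ℝ =>
      Complex.exp (((H : ℂ) + (ω : ℂ) * Complex.I) * (t : ℂ)) *
        X (Real.exp (-t) * γbar)))
    (hY : Integrable (fun t : ℝ =>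
      Complex.exp (((H : ℂ) + (ω : ℂ) * Complex.I) * (t : ℂ)) *
        Y (Real.exp (-t) * γbar)))
    (heq : (∫ t : ℝ, Complex.exp (((H : ℂ) + (ω : ℂ) * Complex.I) * (t : ℂ)) *
              X (Real.exp (-t) * γbar))
         = ∫ t : ℝ, Complex.exp (((H : ℂ) + (ω : ℂ) * Complex.I) * (t : ℂ)) *
              Y (Real.exp (-t) * γbar))
    (hne : (∫ t : ℝ, Complex.exp (((H : ℂ) + (ω : ℂ) * Complex.I) * (t : ℂ)) *
              X (Real.exp (-t) * γbar)) ≠ 0) :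
    ∀ lam₁ lam₂ : ℝ, 0 < lam₁ → 0 < lam₂ →
      (∫ t : ℝ, Complex.exp (((H : ℂ) + (ω : ℂ) * Complex.I) * (t : ℂ)) *
          X (Real.exp (-t) * (lam₁ * γbar)))
        / (∫ t : ℝ, Complex.exp (((H : ℂ) + (ω : ℂ) * Complex.I) * (t : ℂ)) *
          Y (Real.exp (-t) * (lam₂ * γbar)))
      = ((lam₁ / lam₂ : ℝ) : ℂ) ^ ((H : ℂ) + (ω : ℂ) * Complex.I) := by
  intro lam₁ lam₂ h1 h2
  set s : ℂ := (H : ℂ) + (ω : ℂ) * Complex.I with hs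
  rw [lds_scale X s γbar lam₁ h1, lds_scale Y s γbar lam₂ h2, ← heq]
  set A := ∫ t : ℝ, Complex.exp (s * (t : ℂ)) * X (Real.exp (-t) * γbar)
  have hratio : Complex.exp (s * Real.log lam₁) * A /
      (Complex.exp (s * Real.log lam₂) * A)
      = Complex.exp (s * (Real.log lam₁ - Real.log lam₂)) := by
    rw [mul_div_mul_right _ _ hne, ← Complex.exp_sub]
    congr 1
    push_cast
    ring
  rw [hratio]
  have hpos : (0:ℝ) < lam₁ / lam₂ := div_pos h1 h2
  rw [Complex.cpow_def_of_ne_zero (by exact_mod_cast hpos.ne'),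
    Complex.ofReal_log hpos.le |>.symm, Real.log_div h1.ne' h2.ne']
  push_cast
  ring_nf
end

section
/- Let a > 0 and b > 0 be real numbers and let s ∈ ℂ with 0 < Re(s) < b. Then ∫₀^∞ λ^{−s−1} · γ̂(b, aλ) dλ = a^{s} · Γ(b−s) / s, where γ̂(b, y) = ∫₀^y t^{b−1} e^{−t} dt is the lower incomplete Gamma function, Γ is the complex Gamma function, and λ^{−s−1}, a^{s} denote complex powers of positive reals. -/
open MeasureTheory Real

/-- The lower incomplete Gamma function `γ̂(b, y) = ∫₀^y t^{b−1} e^{−t} dt`. -/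
noncomputable def lowerIncGamma (b y : ℝ) : ℝ :=
  ∫ t in (0 : ℝ)..y, t ^ (b - 1) * Real.exp (-t)

open Set Filter

section aux
variable {b : ℝ}

lemma g_intervalIntegrable (hb : 0 < b) (x y : ℝ) :
    IntervalIntegrable (fun t : ℝ => t ^ (b - 1) * Real.exp (-t)) volume x y :=
  (intervalIntegral.intervalIntegrable_rpow' (by linarith)).mul_continuousOn
    (Continuous.continuousOn (by continuity))

lemma lowerIncGamma_continuous (hb : 0 < b) : Continuous (lowerIncGamma b) :=
  intervalIntegral.continuous_primitive (fun x y => g_intervalIntegrable hb x y) 0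

lemma lowerIncGamma_nonneg (hb : 0 < b) {y : ℝ} (hy : 0 ≤ y) : 0 ≤ lowerIncGamma b y := by
  apply intervalIntegral.integral_nonneg hy
  intro t ht
  exact mul_nonneg (Real.rpow_nonneg ht.1 _) (Real.exp_nonneg _)

lemma lowerIncGamma_le_rpow (hb : 0 < b) {y : ℝ} (hy : 0 ≤ y) :
    lowerIncGamma b y ≤ y ^ b / b := by
  have h1 : lowerIncGamma b y ≤ ∫ t in (0:ℝ)..y, t ^ (b - 1) := by
    apply intervalIntegral.integral_mono_on hy (g_intervalIntegrable hb 0 y)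
      (intervalIntegral.intervalIntegrable_rpow' (by linarith))
    intro t ht
    have : Real.exp (-t) ≤ 1 := Real.exp_le_one_iff.2 (by linarith [ht.1])
    calc t ^ (b-1) * Real.exp (-t) ≤ t ^ (b-1) * 1 :=
          mul_le_mul_of_nonneg_left this (Real.rpow_nonneg ht.1 _)
      _ = t ^ (b-1) := mul_one _
  rw [integral_rpow (Or.inl (by linarith))] at h1
  rw [Real.zero_rpow (by linarith : b - 1 + 1 ≠ 0)] at h1
  simpa [sub_add_cancel] using h1

lemma lowerIncGamma_le_Gamma (hb : 0 < b) {y : ℝ} (hy : 0 ≤ y) :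
    lowerIncGamma b y ≤ Real.Gamma b := by
  rw [Real.Gamma_eq_integral hb]
  rw [lowerIncGamma, intervalIntegral.integral_of_le hy]
  have : ∫ t in Ioc (0:ℝ) y, t ^ (b-1) * Real.exp (-t)
      = ∫ t in Ioc (0:ℝ) y, Real.exp (-t) * t ^ (b-1) := by
    simp_rw [mul_comm]
  rw [this]
  apply setIntegral_mono_set (Real.GammaIntegral_convergent hb)
  · filter_upwards [ae_restrict_mem measurableSet_Ioi] with t ht
    exact mul_nonneg (Real.exp_nonneg _) (Real.rpow_nonneg (le_of_lt ht) _)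
  · exact Filter.Eventually.of_forall (fun t ht => ht.1)

lemma lowerIncGamma_hasDerivAt (hb : 0 < b) {y : ℝ} (hy : 0 < y) :
    HasDerivAt (lowerIncGamma b) (y ^ (b - 1) * Real.exp (-y)) y := by
  apply intervalIntegral.integral_hasDerivAt_right (g_intervalIntegrable hb 0 y)
  · refine ⟨Ioi 0, Ioi_mem_nhds hy, ContinuousOn.aestronglyMeasurable ?_ measurableSet_Ioi⟩
    intro t ht
    exact (((Real.continuousAt_rpow_const t (b-1) (Or.inl (ne_of_gt ht))).mul
      (by fun_prop))).continuousWithinAt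
  · exact ((Real.continuousAt_rpow_const y (b-1) (Or.inl hy.ne')).mul
      (by fun_prop))

end aux

set_option maxHeartbeats 1000000 in
/-- **Mellin-type transform of the lower incomplete Gamma function.**
For `a, b > 0` and `0 < Re(s) < b`,
`∫₀^∞ λ^{−s−1} γ̂(b, aλ) dλ = a^s Γ(b−s) / s`. -/
theorem mellin_lowerIncGamma
    (a b : ℝ) (ha : 0 < a) (hb : 0 < b)
    (s : ℂ) (h0 : 0 < s.re) (hsb : s.re < b) :
    (∫ l in Set.Ioi (0 : ℝ), (l : ℂ) ^ (-s - 1) * (lowerIncGamma b (a * l) : ℂ))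
      = (a : ℂ) ^ s * Complex.Gamma ((b : ℂ) - s) / s := by
  have hs0 : s ≠ 0 := fun h => by simp [h] at h0
  have hbs : (0:ℝ) < ((b:ℂ) - s).re := by
    simp only [Complex.sub_re, Complex.ofReal_re]; linarith
  set f1 : ℝ → ℂ := fun x => (x:ℂ) ^ (-s - 1) * (lowerIncGamma b (a * x) : ℂ) with hf1
  set f2 : ℝ → ℂ := fun x => (x:ℂ) ^ (-s) / (-s)
      * (((a*x) ^ (b-1) * Real.exp (-(a*x)) * a : ℝ) : ℂ) with hf2
  set H : ℝ → ℂ := fun x => (x:ℂ) ^ (-s) / (-s) * (lowerIncGamma b (a * x) : ℂ) with hHdef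
  have hne : -s - 1 ≠ -1 := by
    intro h
    apply hs0
    have : -s = 0 := by linear_combination h
    simpa [neg_eq_zero] using this
  -- derivative
  have hderiv : ∀ x ∈ Ioi (0:ℝ), HasDerivAt H (f1 x + f2 x) x := by
    intro x hx
    rw [mem_Ioi] at hx
    have h1 : HasDerivAt (fun y : ℝ => (y:ℂ) ^ (-s) / (-s)) ((x:ℂ) ^ (-s-1)) x := by
      have := hasDerivAt_ofReal_cpow_const' (ne_of_gt hx) hne
      simpa using this
    have h2r : HasDerivAt (fun y : ℝ => lowerIncGamma b (a * y))
        ((a*x) ^ (b-1) * Real.exp (-(a*x)) * a) x := by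
      have hax : 0 < a * x := by positivity
      have hg : HasDerivAt (fun y : ℝ => a * y) a x := by
        simpa using (hasDerivAt_id x).const_mul a
      simpa [mul_comm, Function.comp_def] using (lowerIncGamma_hasDerivAt hb hax).comp x hg
    have h2 : HasDerivAt (fun y : ℝ => ((lowerIncGamma b (a * y) : ℝ) : ℂ))
        (((a*x) ^ (b-1) * Real.exp (-(a*x)) * a : ℝ) : ℂ) x := h2r.ofReal_comp
    exact h1.mul h2
  -- continuity at 0
  have hH0 : H 0 = 0 := by
    simp [hHdef, Complex.zero_cpow (neg_ne_zero.mpr hs0)]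
  have hcont : ContinuousWithinAt H (Ici (0:ℝ)) 0 := by
    rw [ContinuousWithinAt, hH0]
    have hbd : ∀ᶠ x in nhdsWithin 0 (Ici (0:ℝ)),
        ‖H x‖ ≤ (a ^ b / (b * ‖s‖)) * x ^ (b - s.re) := by
      filter_upwards [self_mem_nhdsWithin] with x (hx : (0:ℝ) ≤ x)
      rcases eq_or_lt_of_le hx with h | hxpos
      · simp [hHdef, ← h, Complex.zero_cpow (neg_ne_zero.mpr hs0),
          Real.zero_rpow (by linarith : b - s.re ≠ 0)]
      · have hax : 0 ≤ a * x := by positivity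
        have hnorm : ‖H x‖ = x ^ (-s.re) / ‖s‖ * |lowerIncGamma b (a*x)| := by
          simp only [hHdef, norm_mul, norm_div, norm_neg, Complex.norm_real,
            Real.norm_eq_abs]
          rw [Complex.norm_cpow_eq_rpow_re_of_pos hxpos]
          simp [Complex.neg_re]
        rw [hnorm, abs_of_nonneg (lowerIncGamma_nonneg hb hax)]
        have hle : lowerIncGamma b (a*x) ≤ (a*x) ^ b / b := lowerIncGamma_le_rpow hb hax
        have : x ^ (-s.re) / ‖s‖ * lowerIncGamma b (a*x)
            ≤ x ^ (-s.re) / ‖s‖ * ((a*x) ^ b / b) := by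
          apply mul_le_mul_of_nonneg_left hle
          positivity
        refine this.trans (le_of_eq ?_)
        rw [Real.mul_rpow ha.le hx]
        rw [show b - s.re = -s.re + b by ring, Real.rpow_add hxpos]
        field_simp
    refine squeeze_zero_norm' hbd ?_
    · have : ContinuousWithinAt (fun x : ℝ => (a ^ b / (b * ‖s‖)) * x ^ (b - s.re))
          (Ici (0:ℝ)) 0 :=
        (continuousAt_const.mul
          (Real.continuousAt_rpow_const 0 (b - s.re) (Or.inr (by linarith)))).continuousWithinAt
      have h00 : (0:ℝ) ^ (b - s.re) = 0 := Real.zero_rpow (by linarith)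
      simpa [ContinuousWithinAt, h00] using this
  -- limit at infinity
  have htop : Tendsto H atTop (nhds (0:ℂ)) := by
    have hbd : ∀ᶠ x in atTop, ‖H x‖ ≤ (Real.Gamma b / ‖s‖) * x ^ (-s.re) := by
      filter_upwards [eventually_gt_atTop (0:ℝ)] with x hxpos
      have hax : 0 ≤ a * x := by positivity
      have hnorm : ‖H x‖ = x ^ (-s.re) / ‖s‖ * |lowerIncGamma b (a*x)| := by
        simp only [hHdef, norm_mul, norm_div, norm_neg, Complex.norm_real,
          Real.norm_eq_abs]
        rw [Complex.norm_cpow_eq_rpow_re_of_pos hxpos]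
        simp [Complex.neg_re]
      rw [hnorm, abs_of_nonneg (lowerIncGamma_nonneg hb hax)]
      have hle : lowerIncGamma b (a*x) ≤ Real.Gamma b := lowerIncGamma_le_Gamma hb hax
      calc x ^ (-s.re) / ‖s‖ * lowerIncGamma b (a*x)
          ≤ x ^ (-s.re) / ‖s‖ * Real.Gamma b := by
            apply mul_le_mul_of_nonneg_left hle; positivity
        _ = Real.Gamma b / ‖s‖ * x ^ (-s.re) := by ring
    refine squeeze_zero_norm' hbd ?_
    · simpa using (tendsto_rpow_neg_atTop h0).const_mul (Real.Gamma b / ‖s‖)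
  -- integrability of f1
  have hmeas1 : AEStronglyMeasurable f1 (volume.restrict (Ioi (0:ℝ))) := by
    apply ContinuousOn.aestronglyMeasurable _ measurableSet_Ioi
    intro x hx
    apply ContinuousWithinAt.mul
    · exact (Complex.continuousAt_ofReal_cpow_const x _
        (Or.inr (ne_of_gt hx))).continuousWithinAt
    · exact (Complex.continuous_ofReal.comp
        ((lowerIncGamma_continuous hb).comp (continuous_const.mul
          continuous_id))).continuousAt.continuousWithinAt
  have hint1 : IntegrableOn f1 (Ioi (0:ℝ)) := by
    rw [← Ioc_union_Ioi_eq_Ioi (zero_le_one' ℝ)]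
    apply IntegrableOn.union
    · apply Integrable.mono' (g := fun x => (a ^ b / b) * x ^ (b - s.re - 1))
      · exact Integrable.const_mul
          ((intervalIntegrable_iff_integrableOn_Ioc_of_le zero_le_one).1
            (intervalIntegral.intervalIntegrable_rpow' (by linarith))) _
      · exact hmeas1.mono_set Ioc_subset_Ioi_self
      · rw [ae_restrict_iff' measurableSet_Ioc]
        apply Filter.Eventually.of_forall
        intro x hx
        have hxpos : 0 < x := hx.1
        have hax : 0 ≤ a * x := by positivity
        have hnorm : ‖f1 x‖ = x ^ (-s.re - 1) * |lowerIncGamma b (a*x)| := by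
          simp only [hf1, norm_mul, Complex.norm_real, Real.norm_eq_abs]
          rw [Complex.norm_cpow_eq_rpow_re_of_pos hxpos]
          simp [Complex.sub_re, Complex.neg_re]
        rw [hnorm, abs_of_nonneg (lowerIncGamma_nonneg hb hax)]
        calc x ^ (-s.re - 1) * lowerIncGamma b (a*x)
            ≤ x ^ (-s.re - 1) * ((a*x) ^ b / b) := by
              apply mul_le_mul_of_nonneg_left (lowerIncGamma_le_rpow hb hax)
              positivity
          _ = (a ^ b / b) * x ^ (b - s.re - 1) := by
              rw [Real.mul_rpow ha.le hxpos.le,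
                show b - s.re - 1 = -s.re - 1 + b by ring, Real.rpow_add hxpos]
              field_simp
    · apply Integrable.mono' (g := fun x => Real.Gamma b * x ^ (-s.re - 1))
      · exact (integrableOn_Ioi_rpow_of_lt (by linarith) one_pos).const_mul _
      · exact hmeas1.mono_set (Ioi_subset_Ioi zero_le_one)
      · rw [ae_restrict_iff' measurableSet_Ioi]
        apply Filter.Eventually.of_forall
        intro x hx
        have hxpos : (0:ℝ) < x := lt_trans one_pos hx
        have hax : 0 ≤ a * x := by positivity
        have hnorm : ‖f1 x‖ = x ^ (-s.re - 1) * |lowerIncGamma b (a*x)| := by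
          simp only [hf1, norm_mul, Complex.norm_real, Real.norm_eq_abs]
          rw [Complex.norm_cpow_eq_rpow_re_of_pos hxpos]
          simp [Complex.sub_re, Complex.neg_re]
        rw [hnorm, abs_of_nonneg (lowerIncGamma_nonneg hb hax)]
        calc x ^ (-s.re - 1) * lowerIncGamma b (a*x)
            ≤ x ^ (-s.re - 1) * Real.Gamma b := by
              apply mul_le_mul_of_nonneg_left (lowerIncGamma_le_Gamma hb hax)
              positivity
          _ = Real.Gamma b * x ^ (-s.re - 1) := by ring
  have hx0     : True := trivial
  have ha0 : (a:ℂ) ≠ 0 := Complex.ofReal_ne_zero.mpr ha.ne'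
  -- f2 in closed form
  have hf2eq : ∀ x ∈ Ioi (0:ℝ), f2 x
      = (a:ℂ) ^ (b:ℂ) / (-s) * ((x:ℂ) ^ ((b:ℂ) - s - 1) * Complex.exp (-((a:ℂ)*(x:ℂ)))) := by
    intro x hx
    rw [mem_Ioi] at hx
    have hax : (0:ℝ) ≤ a * x := by positivity
    have hxc0 : (x:ℂ) ≠ 0 := Complex.ofReal_ne_zero.mpr hx.ne'
    have e1 : (((a*x) ^ (b-1) : ℝ) : ℂ) = (a:ℂ) ^ ((b:ℂ)-1) * (x:ℂ) ^ ((b:ℂ)-1) := by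
      rw [Complex.ofReal_cpow hax]
      push_cast
      rw [Complex.mul_cpow_ofReal_nonneg ha.le hx.le]
    have e2 : ((Real.exp (-(a*x)) : ℝ) : ℂ) = Complex.exp (-((a:ℂ)*(x:ℂ))) := by
      rw [Complex.ofReal_exp]; push_cast; ring_nf
    have e3 : (x:ℂ) ^ (-s) * (x:ℂ) ^ ((b:ℂ)-1) = (x:ℂ) ^ ((b:ℂ) - s - 1) := by
      rw [← Complex.cpow_add _ _ hxc0]; ring_nf
    have e4 : (a:ℂ) ^ ((b:ℂ)-1) * (a:ℂ) = (a:ℂ) ^ (b:ℂ) :=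
      calc (a:ℂ) ^ ((b:ℂ)-1) * (a:ℂ) = (a:ℂ) ^ ((b:ℂ)-1) * (a:ℂ) ^ (1:ℂ) := by
            rw [Complex.cpow_one]
        _ = (a:ℂ) ^ ((b:ℂ)-1+1) := (Complex.cpow_add _ _ ha0).symm
        _ = (a:ℂ) ^ (b:ℂ) := by rw [sub_add_cancel]
    simp only [hf2]
    rw [Complex.ofReal_mul, Complex.ofReal_mul, e1, e2]
    rw [div_mul_eq_mul_div, div_mul_eq_mul_div]
    congr 1
    rw [← e3, ← e4]
    ring
  -- integrability of f2
  have hbase : IntegrableOn (fun x : ℝ => (x:ℂ) ^ ((b:ℂ) - s - 1)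
      * Complex.exp (-((a:ℂ)*(x:ℂ)))) (Ioi (0:ℝ)) := by
    have h2 := Complex.GammaIntegral_convergent hbs
    rw [← mul_zero a, ← integrableOn_Ioi_comp_mul_left_iff _ _ ha] at h2
    have haw : (a:ℂ) ^ ((b:ℂ) - s - 1) ≠ 0 := by
      intro h
      rw [Complex.cpow_eq_zero_iff] at h
      exact ha0 h.1
    refine IntegrableOn.congr_fun (h2.const_mul (((a:ℂ) ^ ((b:ℂ) - s - 1))⁻¹))
      (fun x (hx : 0 < x) => ?_) measurableSet_Ioi
    have hmc : ((a*x : ℝ) : ℂ) ^ ((b:ℂ) - s - 1)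
        = (a:ℂ) ^ ((b:ℂ) - s - 1) * (x:ℂ) ^ ((b:ℂ) - s - 1) := by
      push_cast
      rw [Complex.mul_cpow_ofReal_nonneg ha.le hx.le]
    show ((a:ℂ) ^ ((b:ℂ) - s - 1))⁻¹
        * (((Real.exp (-(a*x)) : ℝ) : ℂ) * ((a*x:ℝ):ℂ) ^ ((b:ℂ) - s - 1)) = _
    rw [hmc, Complex.ofReal_exp]
    push_cast
    field_simp
  have hint2 : IntegrableOn f2 (Ioi (0:ℝ)) :=
    IntegrableOn.congr_fun (hbase.const_mul ((a:ℂ) ^ (b:ℂ) / (-s)))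
      (fun x hx => (hf2eq x hx).symm) measurableSet_Ioi
  -- FTC
  have hFTC : ∫ x in Ioi (0:ℝ), (f1 x + f2 x) = 0 - H 0 :=
    integral_Ioi_of_hasDerivAt_of_tendsto hcont hderiv (hint1.add hint2) htop
  rw [hH0, sub_zero] at hFTC
  rw [MeasureTheory.integral_add hint1 hint2] at hFTC
  have hf1int : ∫ x in Ioi (0:ℝ), f1 x = - ∫ x in Ioi (0:ℝ), f2 x :=
    eq_neg_of_add_eq_zero_left hFTC
  -- compute integral of f2
  have hI2 : ∫ x in Ioi (0:ℝ), f2 x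
      = (a:ℂ) ^ (b:ℂ) / (-s) * ((1/(a:ℂ)) ^ ((b:ℂ) - s) * Complex.Gamma ((b:ℂ) - s)) := by
    rw [setIntegral_congr_fun measurableSet_Ioi hf2eq, MeasureTheory.integral_const_mul]
    congr 1
    have := Complex.integral_cpow_mul_exp_neg_mul_Ioi hbs ha
    simpa [sub_sub] using this
  show (∫ x in Ioi (0:ℝ), f1 x) = _
  rw [hf1int, hI2]
  have h1a : (1/(a:ℂ)) ^ ((b:ℂ) - s) = ((a:ℂ) ^ ((b:ℂ) - s))⁻¹ := by
    rw [one_div, Complex.inv_cpow]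
    rw [Complex.arg_ofReal_of_nonneg ha.le]
    exact (Real.pi_ne_zero).symm
  have hab2 : (a:ℂ) ^ (b:ℂ) = (a:ℂ) ^ ((b:ℂ) - s) * (a:ℂ) ^ s := by
    rw [← Complex.cpow_add _ _ ha0, sub_add_cancel]
  have hne2 : (a:ℂ) ^ ((b:ℂ) - s) ≠ 0 := by
    intro h
    rw [Complex.cpow_eq_zero_iff] at h
    exact ha0 h.1
  rw [h1a, hab2]
  field_simp
end

section
/- Let μ be a probability measure on [0,∞) (the law of the instantaneous SNR γ), let a > 0, b > 0, let 0 < H < b and ω ∈ ℝ, and assume ∫ x^{H} dμ(x) < ∞. Then the function t ↦ e^{(H+iω)t} · (1/Γ(b)) ∫ γ̂(b, a e^{−t} x) dμ(x) is Lebesgue integrable on ℝ and ∫_{−∞}^{∞} e^{(H+iω)t} ((1/Γ(b)) ∫ γ̂(b, a e^{−t} x) dμ(x)) dt = (∫ x^{H+iω} dμ(x)) · a^{H+iω} · Γ(b − (H+iω)) / (Γ(b) · (H+iω)), where γ̂(b, y) = ∫₀^y t^{b−1} e^{−t} dt is the lower incomplete Gamma function, Γ is the complex Gamma function, and complex powers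 of nonnegative reals are used. -/
open MeasureTheory

namespace LampertiAux

open Set Filter

lemma intInteg {b : ℝ} (hb : 0 < b) (u y : ℝ) :
    IntervalIntegrable (fun t : ℝ => t ^ (b - 1) * Real.exp (-t)) volume u y :=
  (intervalIntegral.intervalIntegrable_rpow' (by linarith)).mul_continuousOn
    (Continuous.continuousOn (by continuity))

lemma continuous_lig {b : ℝ} (hb : 0 < b) : Continuous (lowerIncGamma b) :=
  intervalIntegral.continuous_primitive (fun u y => intInteg hb u y) 0

lemma lig_nonneg (b : ℝ) {y : ℝ} (hy : 0 ≤ y) : 0 ≤ lowerIncGamma b y :=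
  intervalIntegral.integral_nonneg hy
    (fun t ht => mul_nonneg (Real.rpow_nonneg ht.1 _) (Real.exp_pos _).le)

lemma lig_eq_setIntegral (b : ℝ) {y : ℝ} (hy : 0 ≤ y) :
    lowerIncGamma b y = ∫ t in Ioc 0 y, t ^ (b - 1) * Real.exp (-t) :=
  intervalIntegral.integral_of_le hy

lemma lig_zero (b : ℝ) : lowerIncGamma b 0 = 0 :=
  intervalIntegral.integral_same


lemma integrableOn_exp_mul_Iic {c : ℝ} (hc : 0 < c) (L : ℝ) :
    IntegrableOn (fun t : ℝ => Real.exp (c * t)) (Iic L) := by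
  have hcont : Continuous fun t : ℝ => Real.exp (c * t) := by continuity
  refine integrableOn_Iic_of_intervalIntegral_norm_bounded
    (Real.exp (c * L) / c) L (a := fun i : ℝ => i) (l := atBot)
    (fun i => hcont.integrableOn_Ioc) tendsto_id ?_
  filter_upwards [eventually_le_atBot L] with i hi
  have h1 : (∫ x in i..L, ‖Real.exp (c * x)‖) = (Real.exp (c * L) - Real.exp (c * i)) / c := by
    simp only [Real.norm_eq_abs, abs_of_pos (Real.exp_pos _)]
    rw [intervalIntegral.integral_comp_mul_left (fun x => Real.exp x) (ne_of_gt hc)]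
    simp [smul_eq_mul, Real.exp_le_exp, sub_div]
    ring
  rw [h1]
  have := (Real.exp_pos (c * i)).le
  have hcL := (Real.exp_pos (c * L)).le
  gcongr
  linarith

lemma norm_cexp_mul (s : ℂ) (t : ℝ) : ‖Complex.exp (s * t)‖ = Real.exp (s.re * t) := by
  rw [Complex.norm_exp]
  congr 1
  simp [Complex.mul_re]

lemma integrableOn_cexp_mul_Iic {p : ℂ} (hp : 0 < p.re) (L : ℝ) :
    IntegrableOn (fun t : ℝ => Complex.exp (p * t)) (Iic L) := by
  refine Integrable.mono' (integrableOn_exp_mul_Iic hp L)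
    ((Complex.continuous_exp.comp
      (continuous_const.mul Complex.continuous_ofReal)).aestronglyMeasurable.restrict) ?_
  exact Filter.Eventually.of_forall fun t => (norm_cexp_mul p t).le

lemma integral_cexp_mul_Iic {p : ℂ} (hp : 0 < p.re) (L : ℝ) :
    ∫ t in Iic L, Complex.exp (p * t) = Complex.exp (p * L) / p := by
  have hp0 : p ≠ 0 := fun h => by simp [h] at hp
  refine tendsto_nhds_unique
    (intervalIntegral_tendsto_integral_Iic L (integrableOn_cexp_mul_Iic hp L) tendsto_id) ?_
  have h1 : ∀ i : ℝ, ∫ x in i..L, Complex.exp (p * x)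
      = (Complex.exp (p * L) - Complex.exp (p * i)) / p :=
    fun i => integral_exp_mul_complex hp0
  simp only [h1, id_eq]
  have h0 : Tendsto (fun i : ℝ => Complex.exp (p * i)) atBot (nhds 0) := by
    rw [tendsto_zero_iff_norm_tendsto_zero]
    simp only [norm_cexp_mul]
    exact Real.tendsto_exp_atBot.comp (tendsto_id.const_mul_atBot hp)
  simpa using (tendsto_const_nhds.sub h0).div_const p

lemma integral_exp_mul_Iic {c : ℝ} (hc : 0 < c) (L : ℝ) :
    ∫ t in Iic L, Real.exp (c * t) = Real.exp (c * L) / c := by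
  have h2 : ((∫ t in Iic L, Real.exp (c * t) : ℝ) : ℂ) = Complex.exp ((c : ℂ) * L) / (c : ℂ) :=
    calc ((∫ t in Iic L, Real.exp (c * t) : ℝ) : ℂ)
        = ∫ t in Iic L, ((Real.exp (c * t) : ℝ) : ℂ) := integral_ofReal.symm
      _ = ∫ t in Iic L, Complex.exp ((c : ℂ) * t) :=
          setIntegral_congr_fun measurableSet_Iic (fun t _ => by push_cast; ring_nf)
      _ = Complex.exp ((c : ℂ) * L) / (c : ℂ) :=
          integral_cexp_mul_Iic (by simpa using hc) L
  rw [show Complex.exp ((c : ℂ) * L) / (c : ℂ) = ((Real.exp (c * L) / c : ℝ) : ℂ) by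
    push_cast; ring] at h2
  exact_mod_cast h2

lemma core {b : ℝ} (hb : 0 < b) {c : ℝ} (hc : 0 < c) {s : ℂ}
    (hs0 : 0 < s.re) (hsb : s.re < b) :
    Integrable (fun t : ℝ =>
        Complex.exp (s * t) * ((lowerIncGamma b (c * Real.exp (-t)) : ℝ) : ℂ)) ∧
      ∫ t : ℝ, Complex.exp (s * t) * ((lowerIncGamma b (c * Real.exp (-t)) : ℝ) : ℂ)
        = (c : ℂ) ^ s * Complex.Gamma ((b : ℂ) - s) / s := by
  have hsne : s ≠ 0 := fun h => by simp [h] at hs0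
  have hcne : (c : ℂ) ≠ 0 := by exact_mod_cast hc.ne'
  set g : ℝ → ℝ := fun v => v ^ (b - 1) * Real.exp (-v) with hg
  set φ : ℝ × ℝ → ℂ := fun q =>
    if q.2 + Real.log q.1 ≤ Real.log c then Complex.exp (s * q.2) * ((g q.1 : ℝ) : ℂ) else 0
    with hφ
  have hgmeas : Measurable g := by fun_prop
  have hmeas : AEStronglyMeasurable φ ((volume.restrict (Ioi 0)).prod volume) := by
    apply Measurable.aestronglyMeasurable
    apply Measurable.ite
    · exact measurableSet_le (measurable_snd.add (Real.measurable_log.comp measurable_fst))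
        measurable_const
    · exact ((Complex.measurable_exp.comp (measurable_const.mul
        (Complex.measurable_ofReal.comp measurable_snd)))).mul
        (Complex.measurable_ofReal.comp (hgmeas.comp measurable_fst))
    · exact measurable_const
  have hind : ∀ v : ℝ, 0 < v → (fun t => φ (v, t)) =
      (Iic (Real.log c - Real.log v)).indicator
        (fun t => Complex.exp (s * t) * ((g v : ℝ) : ℂ)) := by
    intro v hv
    funext t
    rw [Set.indicator_apply]
    simp only [hφ, mem_Iic]
    exact if_congr (by constructor <;> intro <;> linarith) rfl rfl
  have hgnn : ∀ v : ℝ, 0 < v → 0 ≤ g v := fun v hv =>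
    mul_nonneg (Real.rpow_nonneg hv.le _) (Real.exp_pos _).le
  have h1 : ∀ v : ℝ, 0 < v → Integrable (fun t => φ (v, t)) volume := by
    intro v hv
    rw [hind v hv, integrable_indicator_iff measurableSet_Iic]
    exact (integrableOn_cexp_mul_Iic hs0 _).mul_const _
  have h2 : ∀ v : ℝ, 0 < v → (∫ t, ‖φ (v, t)‖)
      = (c ^ s.re / s.re) * (Real.exp (-v) * v ^ (b - s.re - 1)) := by
    intro v hv
    have hnrm : (fun t => ‖φ (v, t)‖) =
        (Iic (Real.log c - Real.log v)).indicator
          (fun t => Real.exp (s.re * t) * g v) := by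
      funext t
      rw [show φ (v, t) = (Iic (Real.log c - Real.log v)).indicator
          (fun t => Complex.exp (s * t) * ((g v : ℝ) : ℂ)) t from congrFun (hind v hv) t,
        norm_indicator_eq_indicator_norm]
      simp only [Set.indicator_apply]
      split_ifs
      · rw [norm_mul, norm_cexp_mul, Complex.norm_real, Real.norm_eq_abs,
          abs_of_nonneg (hgnn v hv)]
      · rfl
    rw [hnrm, integral_indicator measurableSet_Iic, integral_mul_const,
      integral_exp_mul_Iic hs0]
    have hvH : v ^ s.re ≠ 0 := (Real.rpow_pos_of_pos hv _).ne'
    rw [mul_sub, Real.exp_sub, show Real.exp (s.re * Real.log c) = c ^ s.re by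
        rw [Real.rpow_def_of_pos hc, mul_comm],
      show Real.exp (s.re * Real.log v) = v ^ s.re by
        rw [Real.rpow_def_of_pos hv, mul_comm],
      show b - s.re - 1 = b - 1 - s.re by ring, Real.rpow_sub hv]
    field_simp
    ring
  have hmaj : Integrable (fun v => (c ^ s.re / s.re) * (Real.exp (-v) * v ^ (b - s.re - 1)))
      (volume.restrict (Ioi 0)) := by
    refine Integrable.const_mul ?_ _
    have h := Real.GammaIntegral_convergent (s := b - s.re) (by linarith)
    exact (by simpa [show b - s.re - 1 = (b - s.re) - 1 by ring] using h :
      IntegrableOn (fun v => Real.exp (-v) * v ^ (b - s.re - 1)) (Ioi 0))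
  have hInt : Integrable φ ((volume.restrict (Ioi 0)).prod volume) := by
    refine (integrable_prod_iff hmeas).2 ⟨?_, ?_⟩
    · filter_upwards [ae_restrict_mem measurableSet_Ioi] with v hv
      exact h1 v hv
    · refine hmaj.congr ?_
      rw [Filter.EventuallyEq, ae_restrict_iff' measurableSet_Ioi]
      exact Filter.Eventually.of_forall fun v hv => (h2 v hv).symm
  have hval : ∀ v ∈ Ioi (0:ℝ), (∫ t, φ (v, t))
      = (c : ℂ) ^ s / s * (((Real.exp (-v) : ℝ) : ℂ) * (v : ℂ) ^ ((b : ℂ) - s - 1)) := by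
    intro v hv
    rw [mem_Ioi] at hv
    have hvne : (v : ℂ) ≠ 0 := by exact_mod_cast hv.ne'
    rw [hind v hv, integral_indicator measurableSet_Iic, integral_mul_const,
      integral_cexp_mul_Iic hs0]
    have e1 : Complex.exp (s * ((Real.log c - Real.log v : ℝ) : ℂ)) =
        (c : ℂ) ^ s * (v : ℂ) ^ (-s) := by
      rw [Complex.cpow_def_of_ne_zero hcne, Complex.cpow_def_of_ne_zero hvne,
        ← Complex.ofReal_log hc.le, ← Complex.ofReal_log hv.le, ← Complex.exp_add]
      congr 1
      push_cast
      ring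
    have e2 : ((g v : ℝ) : ℂ) = (v : ℂ) ^ ((b : ℂ) - 1) * ((Real.exp (-v) : ℝ) : ℂ) := by
      rw [hg]
      push_cast [Complex.ofReal_cpow hv.le]
      norm_num
    have e3 : (v : ℂ) ^ (-s) * (v : ℂ) ^ ((b : ℂ) - 1) = (v : ℂ) ^ ((b : ℂ) - s - 1) := by
      rw [← Complex.cpow_add _ _ hvne]
      congr 1; ring
    rw [e1, e2, show (c : ℂ) ^ s * (v : ℂ) ^ (-s) / s
        * ((v : ℂ) ^ ((b : ℂ) - 1) * ((Real.exp (-v) : ℝ) : ℂ))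
        = (c : ℂ) ^ s / s * (((Real.exp (-v) : ℝ) : ℂ)
          * ((v : ℂ) ^ (-s) * (v : ℂ) ^ ((b : ℂ) - 1))) from by ring, e3]
  have hswap := integral_integral_swap (f := fun v t => φ (v, t)) hInt
  have hLHS : (∫ v in Ioi (0:ℝ), ∫ t, φ (v, t))
      = (c : ℂ) ^ s / s * Complex.Gamma ((b : ℂ) - s) := by
    rw [setIntegral_congr_fun measurableSet_Ioi hval, integral_const_mul]
    congr 1
    rw [Complex.Gamma_eq_integral (by simp only [Complex.sub_re, Complex.ofReal_re]; linarith),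
      Complex.GammaIntegral]
  have hinner : ∀ t : ℝ, (∫ v in Ioi (0:ℝ), φ (v, t))
      = Complex.exp (s * t) * ((lowerIncGamma b (c * Real.exp (-t)) : ℝ) : ℂ) := by
    intro t
    have hy0 : 0 < c * Real.exp (-t) := mul_pos hc (Real.exp_pos _)
    have hindv : EqOn (fun v => φ (v, t))
        ((Iic (c * Real.exp (-t))).indicator
          (fun v => Complex.exp (s * t) * ((g v : ℝ) : ℂ))) (Ioi 0) := by
      intro v hv
      rw [mem_Ioi] at hv
      rw [Set.indicator_apply]
      simp only [hφ, mem_Iic]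
      refine if_congr ?_ rfl rfl
      have hlogy : Real.log (c * Real.exp (-t)) = Real.log c - t := by
        rw [Real.log_mul hc.ne' (Real.exp_pos _).ne', Real.log_exp]
        ring
      constructor
      · intro h
        have h2 : Real.log v ≤ Real.log (c * Real.exp (-t)) := by rw [hlogy]; linarith
        calc v = Real.exp (Real.log v) := (Real.exp_log hv).symm
          _ ≤ Real.exp (Real.log (c * Real.exp (-t))) := Real.exp_le_exp.2 h2
          _ = c * Real.exp (-t) := Real.exp_log hy0
      · intro h
        have h2 : Real.log v ≤ Real.log (c * Real.exp (-t)) := Real.log_le_log hv h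
        rw [hlogy] at h2
        linarith
    rw [setIntegral_congr_fun measurableSet_Ioi hindv,
      setIntegral_indicator measurableSet_Iic, Ioi_inter_Iic]
    calc ∫ v in Ioc (0:ℝ) (c * Real.exp (-t)), Complex.exp (s * t) * ((g v : ℝ) : ℂ)
        = Complex.exp (s * t) * ∫ v in Ioc (0:ℝ) (c * Real.exp (-t)), ((g v : ℝ) : ℂ) :=
          integral_const_mul _ _
      _ = Complex.exp (s * t)
          * (((∫ v in Ioc (0:ℝ) (c * Real.exp (-t)), g v : ℝ)) : ℂ) := by
            rw [show (∫ v in Ioc (0:ℝ) (c * Real.exp (-t)), ((g v : ℝ) : ℂ))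
              = (((∫ v in Ioc (0:ℝ) (c * Real.exp (-t)), g v : ℝ)) : ℂ) from integral_ofReal]
      _ = _ := by rw [← lig_eq_setIntegral b hy0.le]
  constructor
  · exact (hInt.swap.integral_prod_left).congr
      (Filter.Eventually.of_forall fun t => hinner t)
  · calc ∫ t : ℝ, Complex.exp (s * t) * ((lowerIncGamma b (c * Real.exp (-t)) : ℝ) : ℂ)
        = ∫ t : ℝ, ∫ v in Ioi (0:ℝ), φ (v, t) :=
          integral_congr_ae (Filter.Eventually.of_forall fun t => (hinner t).symm)
      _ = ∫ v in Ioi (0:ℝ), ∫ t, φ (v, t) := hswap.symm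
      _ = (c : ℂ) ^ s / s * Complex.Gamma ((b : ℂ) - s) := hLHS
      _ = (c : ℂ) ^ s * Complex.Gamma ((b : ℂ) - s) / s := by ring

lemma coreReal {b : ℝ} (hb : 0 < b) {c : ℝ} (hc : 0 < c) {H : ℝ}
    (hH0 : 0 < H) (hHb : H < b) :
    Integrable (fun t : ℝ => Real.exp (H * t) * lowerIncGamma b (c * Real.exp (-t))) ∧
      ∫ t : ℝ, Real.exp (H * t) * lowerIncGamma b (c * Real.exp (-t))
        = c ^ H * Real.Gamma (b - H) / H := by
  have h := core hb hc (s := (H : ℂ)) (by simpa using hH0) (by simpa using hHb)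
  have hnn : ∀ t : ℝ, (0 : ℝ) ≤ lowerIncGamma b (c * Real.exp (-t)) := fun t =>
    lig_nonneg b (by positivity)
  have key : ∀ t : ℝ, ‖Complex.exp ((H : ℂ) * t)
        * ((lowerIncGamma b (c * Real.exp (-t)) : ℝ) : ℂ)‖
      = Real.exp (H * t) * lowerIncGamma b (c * Real.exp (-t)) := by
    intro t
    rw [norm_mul, norm_cexp_mul, Complex.norm_real, Real.norm_eq_abs,
      abs_of_nonneg (hnn t), Complex.ofReal_re]
  constructor
  · exact h.1.norm.congr (Filter.Eventually.of_forall key)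
  · have keq : ∀ t : ℝ, Complex.exp ((H : ℂ) * t)
          * ((lowerIncGamma b (c * Real.exp (-t)) : ℝ) : ℂ)
        = ((Real.exp (H * t) * lowerIncGamma b (c * Real.exp (-t)) : ℝ) : ℂ) := by
      intro t
      push_cast
      ring_nf
    have h2 := h.2
    rw [integral_congr_ae (Filter.Eventually.of_forall keq)] at h2
    rw [show (∫ t : ℝ, ((Real.exp (H * t) * lowerIncGamma b (c * Real.exp (-t)) : ℝ) : ℂ))
      = ((∫ t : ℝ, Real.exp (H * t) * lowerIncGamma b (c * Real.exp (-t)) : ℝ) : ℂ)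
      from integral_ofReal] at h2
    rw [← Complex.ofReal_cpow hc.le, show ((b : ℂ) - (H : ℂ)) = ((b - H : ℝ) : ℂ) by
      push_cast; ring, Complex.Gamma_ofReal] at h2
    exact_mod_cast h2

end LampertiAux


/-- **Lamperti dilation spectrum of the average channel reliability.**
For the law `μ` of a nonnegative SNR, parameters `a, b > 0`, `0 < H < b`,
`ω ∈ ℝ`, and moment condition `∫ x^H dμ < ∞`, the function
`t ↦ e^{(H+iω)t} · (1/Γ(b)) E[γ̂(b, a e^{−t} γ)]` is integrable on `ℝ` and its
integral equals `E[γ^{H+iω}] · a^{H+iω} Γ(b−(H+iω)) / (Γ(b)(H+iω))`. -/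
theorem lamperti_spectrum_average_channel_reliability
    (μ : Measure ℝ) [IsProbabilityMeasure μ] (hsupp : μ (Set.Iio 0) = 0)
    (a b : ℝ) (ha : 0 < a) (hb : 0 < b)
    (H ω : ℝ) (hH0 : 0 < H) (hHb : H < b)
    (hmom : Integrable (fun x : ℝ => x ^ H) μ) :
    Integrable (fun t : ℝ =>
      Complex.exp (((H : ℂ) + (ω : ℂ) * Complex.I) * (t : ℂ)) *
        ((((1 / Real.Gamma b) * ∫ x, lowerIncGamma b (a * Real.exp (-t) * x) ∂μ : ℝ)) : ℂ))
    ∧ (∫ t : ℝ, Complex.exp (((H : ℂ) + (ω : ℂ) * Complex.I) * (t : ℂ)) *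
          ((((1 / Real.Gamma b) * ∫ x, lowerIncGamma b (a * Real.exp (-t) * x) ∂μ : ℝ)) : ℂ))
      = (∫ x, (x : ℂ) ^ ((H : ℂ) + (ω : ℂ) * Complex.I) ∂μ)
          * (a : ℂ) ^ ((H : ℂ) + (ω : ℂ) * Complex.I)
          * Complex.Gamma ((b : ℂ) - ((H : ℂ) + (ω : ℂ) * Complex.I))
          / (((Real.Gamma b : ℂ)) * ((H : ℂ) + (ω : ℂ) * Complex.I)) := by
  have hΓb : (0 : ℝ) < Real.Gamma b := Real.Gamma_pos_of_pos hb
  set s : ℂ := (H : ℂ) + (ω : ℂ) * Complex.I with hsdef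
  have hsre : s.re = H := by simp [hsdef]
  have hs0 : 0 < s.re := by rw [hsre]; exact hH0
  have hsb : s.re < b := by rw [hsre]; exact hHb
  have hsne : s ≠ 0 := fun h => by rw [h] at hs0; simp at hs0
  have hx0 : ∀ᵐ x ∂μ, 0 ≤ x := by
    have h := (measure_eq_zero_iff_ae_notMem (μ := μ)).1 hsupp
    filter_upwards [h] with x hx
    simpa [Set.mem_Iio, not_lt] using hx
  set Φ : ℝ × ℝ → ℂ := fun q =>
    Complex.exp (s * q.2) * ((lowerIncGamma b (a * Real.exp (-q.2) * q.1) : ℝ) : ℂ) with hΦ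
  have hcont : Continuous Φ := by
    apply Continuous.mul
    · exact Complex.continuous_exp.comp (continuous_const.mul
        (Complex.continuous_ofReal.comp continuous_snd))
    · exact Complex.continuous_ofReal.comp ((LampertiAux.continuous_lig hb).comp
        ((continuous_const.mul (Real.continuous_exp.comp continuous_snd.neg)).mul
          continuous_fst))
  have hmeas : AEStronglyMeasurable Φ (μ.prod volume) := hcont.aestronglyMeasurable
  have hre : ∀ x t : ℝ, a * Real.exp (-t) * x = a * x * Real.exp (-t) := fun x t => by ring
  have h1 : ∀ᵐ x ∂μ, Integrable (fun t => Φ (x, t)) volume := by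
    filter_upwards [hx0] with x hx
    rcases hx.eq_or_lt with h | h
    · have hz : (fun t => Φ (x, t)) = fun _ => (0 : ℂ) := by
        funext t
        simp [hΦ, ← h, LampertiAux.lig_zero]
      rw [hz]
      exact integrable_zero _ _ _
    · have hc : 0 < a * x := mul_pos ha h
      refine (LampertiAux.core hb hc hs0 hsb).1.congr (Filter.Eventually.of_forall fun t => ?_)
      simp only [hΦ]
      rw [hre x t]
  have h2 : Integrable (fun x => ∫ t, ‖Φ (x, t)‖) μ := by
    refine (hmom.const_mul (a ^ H * Real.Gamma (b - H) / H)).congr ?_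
    filter_upwards [hx0] with x hx
    rcases hx.eq_or_lt with h | h
    · rw [← h]
      simp [hΦ, LampertiAux.lig_zero, Real.zero_rpow hH0.ne']
    · have hc : 0 < a * x := mul_pos ha h
      have hval := (LampertiAux.coreReal hb hc hH0 hHb).2
      have hnn : ∀ t : ℝ, ‖Φ (x, t)‖
          = Real.exp (H * t) * lowerIncGamma b (a * x * Real.exp (-t)) := by
        intro t
        simp only [hΦ]
        rw [norm_mul, LampertiAux.norm_cexp_mul, hsre, Complex.norm_real, Real.norm_eq_abs,
          abs_of_nonneg (LampertiAux.lig_nonneg b (by positivity)), hre x t]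
      calc (a ^ H * Real.Gamma (b - H) / H) * x ^ H
          = (a * x) ^ H * Real.Gamma (b - H) / H := by
            rw [Real.mul_rpow ha.le hx]; ring
        _ = ∫ t, Real.exp (H * t) * lowerIncGamma b (a * x * Real.exp (-t)) := hval.symm
        _ = ∫ t, ‖Φ (x, t)‖ :=
            integral_congr_ae (Filter.Eventually.of_forall fun t => (hnn t).symm)
  have hJ : Integrable Φ (μ.prod volume) := (integrable_prod_iff hmeas).2 ⟨h1, h2⟩
  have key_t : ∀ t : ℝ, (∫ x, Φ (x, t) ∂μ)
      = Complex.exp (s * t)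
        * ((∫ x, lowerIncGamma b (a * Real.exp (-t) * x) ∂μ : ℝ) : ℂ) := by
    intro t
    calc ∫ x, Φ (x, t) ∂μ
        = Complex.exp (s * t)
          * ∫ x, ((lowerIncGamma b (a * Real.exp (-t) * x) : ℝ) : ℂ) ∂μ := by
          simp only [hΦ]
          exact integral_const_mul _ _
      _ = _ := by
          rw [show (∫ x, ((lowerIncGamma b (a * Real.exp (-t) * x) : ℝ) : ℂ) ∂μ)
            = ((∫ x, lowerIncGamma b (a * Real.exp (-t) * x) ∂μ : ℝ) : ℂ)
            from integral_ofReal]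
  constructor
  · refine (hJ.swap.integral_prod_left.const_mul (((1 / Real.Gamma b : ℝ)) : ℂ)).congr
      (Filter.Eventually.of_forall fun t => ?_)
    show (((1 / Real.Gamma b : ℝ)) : ℂ) * (∫ x, Φ (x, t) ∂μ) = _
    rw [key_t t]
    push_cast
    ring
  · have hswap := integral_integral_swap (f := fun x t => Φ (x, t)) hJ
    have hinner : ∀ᵐ x ∂μ, (∫ t, Φ (x, t))
        = (x : ℂ) ^ s * ((a : ℂ) ^ s * (Complex.Gamma ((b : ℂ) - s) / s)) := by
      filter_upwards [hx0] with x hx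
      rcases hx.eq_or_lt with h | h
      · rw [← h]
        have hz : (fun t => Φ ((0 : ℝ), t)) = fun _ => (0 : ℂ) := by
          funext t
          simp [hΦ, LampertiAux.lig_zero]
        rw [hz, integral_zero]
        rw [show ((0 : ℝ) : ℂ) = (0 : ℂ) from rfl, Complex.zero_cpow hsne, zero_mul]
      · have hc : 0 < a * x := mul_pos ha h
        calc (∫ t : ℝ, Φ (x, t))
            = ∫ t : ℝ, Complex.exp (s * t)
              * ((lowerIncGamma b ((a * x) * Real.exp (-t)) : ℝ) : ℂ) :=
              integral_congr_ae (Filter.Eventually.of_forall fun t => by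
                simp only [hΦ]; rw [hre x t])
          _ = ((a * x : ℝ) : ℂ) ^ s * Complex.Gamma ((b : ℂ) - s) / s :=
              (LampertiAux.core hb hc hs0 hsb).2
          _ = (x : ℂ) ^ s * ((a : ℂ) ^ s * (Complex.Gamma ((b : ℂ) - s) / s)) := by
              rw [Complex.ofReal_mul, Complex.mul_cpow_ofReal_nonneg ha.le hx]
              ring
    have hΓbne : ((Real.Gamma b : ℂ)) ≠ 0 := by exact_mod_cast hΓb.ne'
    calc ∫ t : ℝ, Complex.exp (s * t) *
            ((((1 / Real.Gamma b) * ∫ x, lowerIncGamma b (a * Real.exp (-t) * x) ∂μ : ℝ)) : ℂ)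
        = ∫ t : ℝ, (((1 / Real.Gamma b : ℝ)) : ℂ) * (∫ x, Φ (x, t) ∂μ) :=
          integral_congr_ae (Filter.Eventually.of_forall fun t => by
            beta_reduce
            rw [key_t t]; push_cast; ring)
      _ = (((1 / Real.Gamma b : ℝ)) : ℂ) * ∫ t : ℝ, (∫ x, Φ (x, t) ∂μ) :=
          integral_const_mul _ _
      _ = (((1 / Real.Gamma b : ℝ)) : ℂ) * ∫ x, (∫ t, Φ (x, t)) ∂μ := by rw [← hswap]
      _ = (((1 / Real.Gamma b : ℝ)) : ℂ)
          * ((∫ x, (x : ℂ) ^ s ∂μ) * ((a : ℂ) ^ s * (Complex.Gamma ((b : ℂ) - s) / s))) := by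
          rw [integral_congr_ae hinner, integral_mul_const]
      _ = (∫ x, (x : ℂ) ^ s ∂μ) * (a : ℂ) ^ s * Complex.Gamma ((b : ℂ) - s)
          / (((Real.Gamma b : ℂ)) * s) := by
          push_cast
          field_simp
end

section
/- Let μ be a probability measure on [0,∞) (the law of the instantaneous SNR γ) such that x ↦ log(1+x) is μ-integrable, and let a > 0. Then ∫ log(1+x) dμ(x) = ∫₀^∞ (e^{−a u}/u) · (∫ (1 − e^{−a u x}) dμ(x)) du. This is the relationship C_avg(γ̄) = ∫₀^∞ (e^{−au}/u)·{1 − 2 E_avg(uγ̄)} du between the average channel capacity and the average bit error rate E_avg(uγ̄) = E[(1/2)e^{−auγ}] of non-coherent binary modulation schemes (a = 1/2 for non-coherent orthogonal FSK, a = 1 for differentially coherent antipodal PSK). -/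
open MeasureTheory

section FrullaniAux
open Real Set

-- Lemma A: inner interval integral
lemma exp_Ioc_integral (a b u : ℝ) (hab : a ≤ b) (hu : 0 < u) :
    ∫ t in Set.Ioc a b, Real.exp (-(t*u)) = (Real.exp (-(a*u)) - Real.exp (-(b*u))) / u := by
  rw [← intervalIntegral.integral_of_le hab]
  have hderiv : ∀ t ∈ Set.uIcc a b, HasDerivAt (fun t => -Real.exp (-(u*t)) / u)
      (Real.exp (-(t*u))) t := by
    intro t _
    have h1 : HasDerivAt (fun t : ℝ => -(u*t)) (-u) t := by
      have := ((hasDerivAt_id t).const_mul u).neg; simp only [id_eq, mul_one] at this; exact this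
    have h2 := (h1.exp.neg.div_const u)
    refine h2.congr_deriv ?_
    rw [mul_comm u t]; field_simp
  rw [intervalIntegral.integral_eq_sub_of_hasDerivAt hderiv ((Real.continuous_exp.comp (by fun_prop)).intervalIntegrable a b)]
  field_simp [mul_comm]
  ring

lemma frullani_aux (a x : ℝ) (ha : 0 < a) (hx : 0 ≤ x) :
    IntegrableOn (fun u : ℝ => Real.exp (-(a*u)) / u * (1 - Real.exp (-(a*u*x)))) (Set.Ioi 0) ∧
    ∫ u in Set.Ioi (0:ℝ), Real.exp (-(a*u)) / u * (1 - Real.exp (-(a*u*x)))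
      = Real.log (1 + x) := by
  set b := a * (1 + x) with hb
  have hab : a ≤ b := by nlinarith
  have hbpos : 0 < b := by nlinarith
  have hbnd : ∀ u : ℝ, u ∈ Set.Ioi (0:ℝ) →
      ‖Real.exp (-(a*u)) / u * (1 - Real.exp (-(a*u*x)))‖ ≤ a * x * Real.exp (-a * u) := by
    intro u hu
    have hu0 : (0:ℝ) < u := hu
    have hle1 : Real.exp (-(a*u*x)) ≤ 1 := Real.exp_le_one_iff.2 (by nlinarith)
    have h1 : 1 - Real.exp (-(a*u*x)) ≤ a*u*x := by
      nlinarith [Real.add_one_le_exp (-(a*u*x))]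
    have hG0 : 0 ≤ Real.exp (-(a*u)) / u * (1 - Real.exp (-(a*u*x))) :=
      mul_nonneg (by positivity) (by linarith)
    rw [Real.norm_of_nonneg hG0]
    calc Real.exp (-(a*u)) / u * (1 - Real.exp (-(a*u*x)))
        ≤ Real.exp (-(a*u)) / u * (a*u*x) :=
          mul_le_mul_of_nonneg_left h1 (by positivity)
      _ = a * x * Real.exp (-a * u) := by field_simp
  have hint : IntegrableOn (fun u : ℝ => Real.exp (-(a*u)) / u * (1 - Real.exp (-(a*u*x))))
      (Set.Ioi 0) := by
    apply Integrable.mono' (((exp_neg_integrableOn_Ioi 0 ha)).const_mul (a*x))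
    · exact ((by fun_prop : Measurable fun u : ℝ => Real.exp (-(a*u)) / u).mul
        (by fun_prop : Measurable fun u : ℝ => 1 - Real.exp (-(a*u*x)))).aestronglyMeasurable
    · filter_upwards [ae_restrict_mem measurableSet_Ioi] with u hu
      simpa [mul_assoc] using hbnd u hu
  refine ⟨hint, ?_⟩
  -- rewrite integrand as inner integral over t
  have hstep : ∀ u ∈ Set.Ioi (0:ℝ),
      Real.exp (-(a*u)) / u * (1 - Real.exp (-(a*u*x)))
        = ∫ t in Set.Ioc a b, Real.exp (-(t*u)) := by
    intro u hu
    have hu0 : (0:ℝ) < u := hu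
    rw [exp_Ioc_integral a b u hab hu0]
    have : Real.exp (-(b*u)) = Real.exp (-(a*u)) * Real.exp (-(a*u*x)) := by
      rw [← Real.exp_add]; congr 1; rw [hb]; ring
    rw [this]; field_simp
  rw [setIntegral_congr_fun measurableSet_Ioi hstep]
  -- Fubini
  have hf : Integrable (Function.uncurry fun (u t : ℝ) => Real.exp (-(t*u)))
      ((volume.restrict (Set.Ioi 0)).prod (volume.restrict (Set.Ioc a b))) := by
    have hmeas : AEStronglyMeasurable (Function.uncurry fun (u t : ℝ) => Real.exp (-(t*u)))
        ((volume.restrict (Set.Ioi 0)).prod (volume.restrict (Set.Ioc a b))) :=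
      (Real.continuous_exp.comp (by fun_prop)).aestronglyMeasurable
    rw [integrable_prod_iff hmeas]
    constructor
    · refine Filter.Eventually.of_forall fun u => ?_
      exact (Real.continuous_exp.comp (by fun_prop)).integrableOn_Ioc
    · apply Integrable.mono' (((exp_neg_integrableOn_Ioi 0 ha)).const_mul (b - a))
      · exact hmeas.norm.integral_prod_right'
      · filter_upwards [ae_restrict_mem measurableSet_Ioi] with u hu
        have hu0 : (0:ℝ) < u := hu
        have hbd : ∀ t ∈ Set.Ioc a b, ‖‖Real.exp (-(t*u))‖‖ ≤ Real.exp (-(a*u)) := by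
          intro t ht
          rw [norm_norm, Real.norm_of_nonneg (Real.exp_pos _).le]
          exact Real.exp_le_exp.2 (by nlinarith [ht.1])
        calc ‖∫ t in Set.Ioc a b, ‖Real.exp (-(t*u))‖‖
            ≤ Real.exp (-(a*u)) * (volume (Set.Ioc a b)).toReal :=
              norm_setIntegral_le_of_norm_le_const
                (by rw [Real.volume_Ioc]; exact ENNReal.ofReal_lt_top) hbd
          _ = (b - a) * Real.exp (-a * u) := by
              rw [Real.volume_Ioc, ENNReal.toReal_ofReal (by linarith)]
              ring_nf
  rw [integral_integral_swap hf]
  have hinner : ∀ t ∈ Set.Ioc a b, (∫ u in Set.Ioi (0:ℝ), Real.exp (-(t*u))) = 1 / t := by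
    intro t ht
    have ht0 : 0 < t := ha.trans_le ht.1.le
    have := integral_comp_mul_left_Ioi (fun y => Real.exp (-y)) 0 ht0
    simp only [mul_zero, smul_eq_mul] at this
    calc (∫ u in Set.Ioi (0:ℝ), Real.exp (-(t*u))) = t⁻¹ * ∫ y in Set.Ioi (0:ℝ), Real.exp (-y) := this
      _ = 1 / t := by rw [integral_exp_neg_Ioi_zero]; ring
  rw [setIntegral_congr_fun measurableSet_Ioc hinner, ← intervalIntegral.integral_of_le hab,
    integral_one_div (by rw [Set.uIcc_of_le hab]; intro h; exact absurd h.1 (by linarith))]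
  rw [hb]
  congr 1
  field_simp

end FrullaniAux

/-- **Average channel capacity from the ABER of non-coherent binary
modulation.**  For the law `μ` of a nonnegative SNR with `log(1+·)`
μ-integrable and `a > 0`,
`E[log(1+γ)] = ∫₀^∞ (e^{−au}/u) E[1 − e^{−auγ}] du`,
i.e. `C_avg(γ̄) = ∫₀^∞ (e^{−au}/u) {1 − 2E_avg(uγ̄)} du`. -/
theorem average_capacity_from_aber_noncoherent
    (μ : Measure ℝ) [IsProbabilityMeasure μ] (hsupp : μ (Set.Iio 0) = 0)
    (hlog : Integrable (fun x : ℝ => Real.log (1 + x)) μ)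
    (a : ℝ) (ha : 0 < a) :
    (∫ x, Real.log (1 + x) ∂μ)
      = ∫ u in Set.Ioi (0 : ℝ),
          (Real.exp (-(a * u)) / u) * ∫ x, (1 - Real.exp (-(a * u * x))) ∂μ := by
  have hx_ae : ∀ᵐ x ∂μ, (0:ℝ) ≤ x := by
    rw [ae_iff]
    have : {x : ℝ | ¬ (0:ℝ) ≤ x} = Set.Iio 0 := by ext y; simp [not_le]
    rw [this]; exact hsupp
  set G : ℝ → ℝ → ℝ := fun x u => Real.exp (-(a*u)) / u * (1 - Real.exp (-(a*u*x))) with hG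
  have huncurry : Integrable (Function.uncurry G) (μ.prod (volume.restrict (Set.Ioi 0))) := by
    have hmeas : AEStronglyMeasurable (Function.uncurry G)
        (μ.prod (volume.restrict (Set.Ioi 0))) := by
      apply Measurable.aestronglyMeasurable
      have : Function.uncurry G = fun p : ℝ × ℝ =>
          Real.exp (-(a*p.2)) / p.2 * (1 - Real.exp (-(a*p.2*p.1))) := rfl
      rw [this]; fun_prop
    rw [integrable_prod_iff hmeas]
    constructor
    · filter_upwards [hx_ae] with x hx
      exact (frullani_aux a x ha hx).1
    · apply hlog.congr
      filter_upwards [hx_ae] with x hx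
      have h0 : ∀ u ∈ Set.Ioi (0:ℝ), ‖G x u‖ = G x u := by
        intro u hu
        have hu0 : (0:ℝ) < u := hu
        apply Real.norm_of_nonneg
        have hle1 : Real.exp (-(a*u*x)) ≤ 1 := Real.exp_le_one_iff.2
          (by nlinarith [mul_nonneg (mul_nonneg ha.le hu0.le) hx])
        exact mul_nonneg (by positivity) (by linarith)
      show Real.log (1 + x) = ∫ u in Set.Ioi (0:ℝ), ‖G x u‖
      calc Real.log (1 + x) = ∫ u in Set.Ioi (0:ℝ), G x u := (frullani_aux a x ha hx).2.symm
        _ = ∫ u in Set.Ioi (0:ℝ), ‖G x u‖ :=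
          setIntegral_congr_fun measurableSet_Ioi fun u hu => (h0 u hu).symm
  calc (∫ x, Real.log (1 + x) ∂μ)
      = ∫ x, (∫ u in Set.Ioi (0:ℝ), G x u) ∂μ := by
        refine integral_congr_ae ?_
        filter_upwards [hx_ae] with x hx
        exact (frullani_aux a x ha hx).2.symm
    _ = ∫ u in Set.Ioi (0:ℝ), (∫ x, G x u ∂μ) := integral_integral_swap huncurry
    _ = ∫ u in Set.Ioi (0 : ℝ),
          (Real.exp (-(a * u)) / u) * ∫ x, (1 - Real.exp (-(a * u * x))) ∂μ := by
        simp only [hG, integral_const_mul]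
end

section
/- Let μ be a probability measure on [0,∞) (the law of the instantaneous SNR γ) such that x ↦ log(1+x) is μ-integrable, let γ_th > 0 be a threshold with μ({γ_th}) = 0. Then the outage probability satisfies μ([0, γ_th]) = 1 − (1/π) · ∫ Im(Log(1 − x/γ_th)) dμ(x), where Log is the principal branch of the complex logarithm (with imaginary part in (−π, π], so that Log of a negative real number has imaginary part π, matching the convention −γ̄ = e^{iπ}γ̄). In other words, P_out(γ̄; γ_th) = 1 − (1/π)·Im{C_avg(−γ̄/γ_th)}, where C_avg(−γ̄/γ_th) denotes the analytic continuation E[Log(1 − γ/γ_th)] of the average channel capacity C_avg(uγ̄) = E[log(1+uγ)] to the negative argument u = −1/γ_th. -/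
open MeasureTheory Real

/-- **Outage probability from the analytically continued average channel
capacity.**  For the law `μ` of a nonnegative SNR with `log(1+·)` μ-integrable
and a threshold `γ_th > 0` that is not an atom of `μ`,
`P_out(γ̄; γ_th) = μ([0, γ_th]) = 1 − (1/π) Im{ E[Log(1 − γ/γ_th)] }`,
where `Log` is the principal branch of the complex logarithm. -/
theorem outage_probability_from_average_capacity
    (μ : Measure ℝ) [IsProbabilityMeasure μ] (hsupp : μ (Set.Iio 0) = 0)
    (hlog : Integrable (fun x : ℝ => Real.log (1 + x)) μ)
    (γth : ℝ) (hγth : 0 < γth) (hatom : μ {γth} = 0) :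
    (μ (Set.Icc 0 γth)).toReal
      = 1 - (1 / π) * ∫ x, (Complex.log (1 - (x : ℂ) / (γth : ℂ))).im ∂μ := by
  have hπ : (0:ℝ) < π := Real.pi_pos
  have hfun : ∀ x : ℝ, (Complex.log (1 - (x:ℂ)/(γth:ℂ))).im
      = Set.indicator (Set.Ioi γth) (fun _ => π) x := by
    intro x
    have hcast : (1 - (x:ℂ)/(γth:ℂ)) = ((1 - x/γth : ℝ) : ℂ) := by push_cast; ring
    rw [hcast, Complex.log_im]
    by_cases hx : γth < x
    · have hneg : (1 - x/γth : ℝ) < 0 := by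
        rw [sub_neg, lt_div_iff₀ hγth]; linarith
      rw [Complex.arg_ofReal_of_neg hneg]; exact (Set.indicator_of_mem hx (fun _ => π)).symm
    · have hnn : (0:ℝ) ≤ 1 - x/γth := by
        have hle : x/γth ≤ 1 := by
          rw [div_le_one hγth]; exact not_lt.mp hx
        linarith
      rw [Complex.arg_ofReal_of_nonneg hnn]; exact (Set.indicator_of_notMem hx (fun _ => π)).symm
  have hint : ∫ x, (Complex.log (1 - (x:ℂ)/(γth:ℂ))).im ∂μ
      = (μ (Set.Ioi γth)).toReal * π := by
    simp_rw [hfun]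
    rw [integral_indicator_const (π) measurableSet_Ioi, smul_eq_mul]
    rfl
  rw [hint]
  have hπne : π ≠ 0 := ne_of_gt hπ
  have hRHS : 1 - 1/π * ((μ (Set.Ioi γth)).toReal * π)
      = 1 - (μ (Set.Ioi γth)).toReal := by
    field_simp
  rw [hRHS]
  -- μ (Icc 0 γth) = μ (Iic γth)
  have h1 : μ (Set.Icc 0 γth) = μ (Set.Iic γth) := by
    refine le_antisymm (measure_mono Set.Icc_subset_Iic_self) ?_
    have hsub : Set.Iic γth ⊆ Set.Iio 0 ∪ Set.Icc 0 γth := by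
      intro y hy
      rcases lt_or_ge y 0 with h | h
      · exact Or.inl h
      · exact Or.inr ⟨h, hy⟩
    calc μ (Set.Iic γth) ≤ μ (Set.Iio 0 ∪ Set.Icc 0 γth) := measure_mono hsub
      _ ≤ μ (Set.Iio 0) + μ (Set.Icc 0 γth) := measure_union_le _ _
      _ = μ (Set.Icc 0 γth) := by rw [hsupp, zero_add]
  have h2 : μ (Set.Iic γth) = 1 - μ (Set.Ioi γth) := by
    rw [← Set.compl_Ioi, measure_compl measurableSet_Ioi (measure_ne_top μ _),
      measure_univ]
  rw [h1, h2, ENNReal.toReal_sub_of_le (prob_le_one) ENNReal.one_ne_top,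
    ENNReal.toReal_one]
end

section
/- Let μ be a probability measure on [0,∞) (the law of the instantaneous SNR γ), let C_th > 0 be a capacity threshold, and assume μ({e^{C_th} − 1}) = 0. Then the outage capacity satisfies μ({x ≥ 0 : log(1+x) ≤ C_th}) = 1 − (1/π) · ∫ Im(Log(1 − x/(e^{C_th} − 1))) dμ(x), where Log is the principal branch of the complex logarithm (imaginary part in (−π, π], equal to π on negative reals). In other words, C_out(γ̄; C_th) = 1 − (1/π)·Im{C_avg(−γ̄/(e^{C_th} − 1))}, where C_avg(−γ̄/r) denotes the analytic continuation E[Log(1 − γ/r)] of the average channel capacity. -/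
open MeasureTheory Real

/-- **Outage capacity from the analytically continued average channel
capacity.**  For the law `μ` of a nonnegative SNR, a capacity threshold
`C_th > 0` such that `e^{C_th} − 1` is not an atom of `μ`,
`C_out(γ̄; C_th) = P(log(1+γ) ≤ C_th)
  = 1 − (1/π) Im{ E[Log(1 − γ/(e^{C_th} − 1))] }`,
where `Log` is the principal branch of the complex logarithm. -/
theorem outage_capacity_from_average_capacity
    (μ : Measure ℝ) [IsProbabilityMeasure μ] (hsupp : μ (Set.Iio 0) = 0)
    (Cth : ℝ) (hCth : 0 < Cth) (hatom : μ {Real.exp Cth - 1} = 0) :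
    (μ {x : ℝ | 0 ≤ x ∧ Real.log (1 + x) ≤ Cth}).toReal
      = 1 - (1 / π) *
          ∫ x, (Complex.log (1 - (x : ℂ) / ((Real.exp Cth - 1 : ℝ) : ℂ))).im ∂μ := by
  set r : ℝ := Real.exp Cth - 1 with hr_def
  have hr : 0 < r := by
    have : (1 : ℝ) < Real.exp Cth := by
      have := Real.exp_lt_exp.mpr hCth
      simpa using this
    simp [hr_def]; linarith
  -- the set equals Icc 0 r
  have hset : {x : ℝ | 0 ≤ x ∧ Real.log (1 + x) ≤ Cth} = Set.Icc 0 r := by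
    ext x
    simp only [Set.mem_setOf_eq, Set.mem_Icc]
    constructor
    · rintro ⟨hx, hlog⟩
      refine ⟨hx, ?_⟩
      have h1 : (0:ℝ) < 1 + x := by linarith
      have := (Real.log_le_iff_le_exp h1).mp hlog
      simp only [hr_def]; linarith
    · rintro ⟨hx, hxr⟩
      refine ⟨hx, ?_⟩
      have h2 : 1 + x ≤ Real.exp Cth := by
        have : x ≤ r := hxr
        simp only [hr_def] at this; linarith
      calc Real.log (1 + x) ≤ Real.log (Real.exp Cth) :=
            Real.log_le_log (by linarith) h2
        _ = Cth := Real.log_exp Cth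
  -- integrand is π times indicator of Ioi r
  have hf : ∀ x : ℝ, (Complex.log (1 - (x : ℂ) / ((r : ℝ) : ℂ))).im
      = Set.indicator (Set.Ioi r) (fun _ => π) x := by
    intro x
    have hcast : (1 - (x : ℂ) / ((r : ℝ) : ℂ)) = (((1 - x / r : ℝ)) : ℂ) := by
      push_cast; ring
    rw [hcast, Complex.log_im]
    rcases lt_trichotomy x r with h | h | h
    · rw [Set.indicator_of_notMem (by simpa using h.not_gt)]
      apply Complex.arg_ofReal_of_nonneg
      have : x / r < 1 := (div_lt_one hr).mpr h
      linarith
    · subst h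
      rw [Set.indicator_of_notMem (by simp)]
      simp [div_self hr.ne']
    · rw [Set.indicator_of_mem (by simpa using h)]
      apply Complex.arg_ofReal_of_neg
      have : 1 < x / r := (one_lt_div hr).mpr h
      linarith
  have hint : ∫ x, (Complex.log (1 - (x : ℂ) / ((r : ℝ) : ℂ))).im ∂μ
      = (μ (Set.Ioi r)).toReal * π := by
    rw [integral_congr_ae (Filter.Eventually.of_forall hf),
      integral_indicator_const _ measurableSet_Ioi]
    simp [mul_comm]
    rfl
  -- measure identities
  have hIic : μ (Set.Icc 0 r) = μ (Set.Iic r) := by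
    apply le_antisymm (measure_mono Set.Icc_subset_Iic_self)
    have hsub : Set.Iic r ⊆ Set.Icc 0 r ∪ Set.Iio 0 := by
      intro x hx
      rcases le_or_gt 0 x with h | h
      · exact Or.inl ⟨h, hx⟩
      · exact Or.inr h
    calc μ (Set.Iic r) ≤ μ (Set.Icc 0 r ∪ Set.Iio 0) := measure_mono hsub
      _ ≤ μ (Set.Icc 0 r) + μ (Set.Iio 0) := measure_union_le _ _
      _ = μ (Set.Icc 0 r) := by rw [hsupp, add_zero]
  have hsum : (μ (Set.Iic r)).toReal + (μ (Set.Ioi r)).toReal = 1 := by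
    rw [← ENNReal.toReal_add (measure_ne_top μ _) (measure_ne_top μ _),
      ← measure_union (Set.Iic_disjoint_Ioi le_rfl) measurableSet_Ioi,
      Set.Iic_union_Ioi, measure_univ]
    simp
  rw [hset, hIic, hint]
  have hπ : (π : ℝ) ≠ 0 := Real.pi_ne_zero
  field_simp
  linarith
end

section
/- Let f : ℝ → ℝ be a nonnegative measurable probability density vanishing on (−∞, 0) (so μ = f·Lebesgue is the law of a nonnegative SNR γ), and let r > 0 be a point at which f is continuous. Then the function ρ ↦ (1/π) · ∫₀^∞ Im(Log(1 − x/ρ)) · f(x) dx (which equals P(γ > ρ) = Im{C_avg(−γ̄/ρ)}/π) is differentiable at ρ = r with derivative −f(r); equivalently, the probability density of the SNR is recovered from the exact average channel capacity by f(r) = −(1/π) · (∂/∂r) Im{C_avg(−γ̄/r)}, where Log is the principal branch of the complex logarithm (imaginary part in (−π, π], equal to π on negative reals) and C_avg(−γ̄/r) = ∫₀^∞ Log(1 − x/r) f(x) dx. -/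
open MeasureTheory Real

/-- **Recovering the SNR density from the exact average channel capacity.**
Let `f` be a nonnegative measurable probability density vanishing on
`(−∞, 0)` and continuous at `r > 0`.  Then
`ρ ↦ (1/π) ∫₀^∞ Im(Log(1 − x/ρ)) f(x) dx` (the complementary outage
probability `P(γ > ρ)`) is differentiable at `ρ = r` with derivative `−f(r)`;
i.e. `f(r) = −(1/π) ∂/∂r Im{C_avg(−γ̄/r)}`. -/
theorem snr_density_from_average_capacity
    (f : ℝ → ℝ) (hf : Measurable f) (hnn : ∀ x, 0 ≤ f x)
    (hzero : ∀ x < (0 : ℝ), f x = 0) (hprob : (∫ x, f x) = 1)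
    (r : ℝ) (hr : 0 < r) (hcont : ContinuousAt f r) :
    HasDerivAt
      (fun ρ : ℝ => (1 / π) *
        ∫ x in Set.Ioi (0 : ℝ), (Complex.log (1 - (x : ℂ) / (ρ : ℂ))).im * f x)
      (-f r) r := by
  have hint : Integrable f := by
    by_contra h
    rw [integral_undef h] at hprob
    norm_num at hprob
  -- key identity for ρ > 0
  have key : ∀ ρ : ℝ, 0 < ρ →
      (∫ x in Set.Ioi (0 : ℝ), (Complex.log (1 - (x : ℂ) / (ρ : ℂ))).im * f x)
        = π * ∫ x in Set.Ioi ρ, f x := by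
    intro ρ hρ
    have hne : ∀ᵐ x : ℝ, x ≠ ρ := by
      refine (MeasureTheory.ae_iff).mpr ?_
      simpa using measure_singleton (α := ℝ) ρ
    have hcongr : (∫ x in Set.Ioi (0 : ℝ), (Complex.log (1 - (x : ℂ) / (ρ : ℂ))).im * f x)
        = ∫ x in Set.Ioi (0 : ℝ), (Set.Ioi ρ).indicator (fun x => π * f x) x := by
      refine setIntegral_congr_ae measurableSet_Ioi ?_
      filter_upwards [hne] with x hx hx0
      have hcast : (1 : ℂ) - (x : ℂ) / (ρ : ℂ) = ((1 - x / ρ : ℝ) : ℂ) := by push_cast; ring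
      rcases lt_or_gt_of_ne hx with hlt | hgt
      · have hpos : 0 < 1 - x / ρ := by
          have : x / ρ < 1 := (div_lt_one hρ).mpr hlt
          linarith
        have : (Complex.log (1 - (x : ℂ) / (ρ : ℂ))).im = 0 := by
          rw [hcast, Complex.log_im, Complex.arg_ofReal_of_nonneg hpos.le]
        rw [this, Set.indicator_of_notMem (by simpa using hlt.not_gt)]
        ring
      · have hneg : 1 - x / ρ < 0 := by
          have : 1 < x / ρ := (one_lt_div hρ).mpr hgt
          linarith
        have : (Complex.log (1 - (x : ℂ) / (ρ : ℂ))).im = π := by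
          rw [hcast, Complex.log_im, Complex.arg_ofReal_of_neg hneg]
        rw [this, Set.indicator_of_mem (by simpa using hgt)]
    rw [hcongr, MeasureTheory.integral_indicator measurableSet_Ioi]
    rw [Measure.restrict_restrict measurableSet_Ioi]
    have hset : Set.Ioi ρ ∩ Set.Ioi (0 : ℝ) = Set.Ioi ρ := by
      ext x; simp only [Set.mem_inter_iff, Set.mem_Ioi]
      constructor
      · tauto
      · intro h; exact ⟨h, lt_trans hρ h⟩
    rw [hset, MeasureTheory.integral_const_mul]
  -- the function eventually equals a nice antiderivative
  set C : ℝ := ∫ x in Set.Ioi (0 : ℝ), f x with hC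
  have heq : (fun ρ : ℝ => (1 / π) *
      ∫ x in Set.Ioi (0 : ℝ), (Complex.log (1 - (x : ℂ) / (ρ : ℂ))).im * f x)
      =ᶠ[nhds r] (fun ρ : ℝ => C - ∫ x in (0:ℝ)..ρ, f x) := by
    filter_upwards [eventually_gt_nhds hr] with ρ hρ
    rw [key ρ hρ]
    have hunion : Set.Ioc (0:ℝ) ρ ∪ Set.Ioi ρ = Set.Ioi (0:ℝ) :=
      Set.Ioc_union_Ioi_eq_Ioi hρ.le
    have hsplit : C = (∫ x in Set.Ioc (0:ℝ) ρ, f x) + ∫ x in Set.Ioi ρ, f x := by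
      rw [hC, ← hunion, setIntegral_union (Set.Ioc_disjoint_Ioi le_rfl) measurableSet_Ioi
        hint.integrableOn hint.integrableOn]
    rw [intervalIntegral.integral_of_le hρ.le]
    have hπ : (π : ℝ) ≠ 0 := Real.pi_ne_zero
    field_simp
    linarith [hsplit]
  have hd : HasDerivAt (fun ρ : ℝ => C - ∫ x in (0:ℝ)..ρ, f x) (-f r) r := by
    have h1 : HasDerivAt (fun ρ : ℝ => ∫ x in (0:ℝ)..ρ, f x) (f r) r :=
      intervalIntegral.integral_hasDerivAt_right hint.intervalIntegrable
        (hf.stronglyMeasurable.stronglyMeasurableAtFilter) hcont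
    exact h1.const_sub C
  exact hd.congr_of_eventuallyEq heq
end

section
/- Let μ be a probability measure on [0,∞) (the law of the instantaneous SNR γ), and let H : ℝ → ℝ be differentiable on [0,∞) with continuous derivative H′ such that x ↦ H(x) is μ-integrable and r ↦ H′(r)·μ((r,∞)) is Lebesgue integrable on (0,∞). Then ∫ H(x) dμ(x) = H(0) + (1/π) · ∫₀^∞ H′(r) · (∫ Im(Log(1 − x/r)) dμ(x)) dr, where Log is the principal branch of the complex logarithm (imaginary part in (−π, π], equal to π on negative reals, and Log 0 := 0). In other words, any average performance measure H_avg(γ̄) = E[H(γ)] can be computed from the exact average channel capacity as H_avg(γ̄) = H(0) + (1/π)∫₀^∞ H′(r)·Im{C_avg(−γ̄/r)} dr (the channel-capacity–based performance analysis). -/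
open MeasureTheory Real

/-- **Channel-capacity–based performance analysis.**
For the law `μ` of a nonnegative SNR and a performance measure `H`
differentiable on `[0,∞)` with continuous derivative `H'`, with `H`
μ-integrable and `r ↦ H'(r)·P(γ > r)` Lebesgue integrable on `(0,∞)`,
the average performance measure satisfies
`E[H(γ)] = H(0) + (1/π) ∫₀^∞ H'(r) Im{ E[Log(1 − γ/r)] } dr`,
where `Log` is the principal branch of the complex logarithm. -/
theorem cc_based_performance_analysis
    (μ : Measure ℝ) [IsProbabilityMeasure μ] (hsupp : μ (Set.Iio 0) = 0)
    (H H' : ℝ → ℝ)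
    (hderiv : ∀ x ∈ Set.Ici (0 : ℝ), HasDerivWithinAt H (H' x) (Set.Ici 0) x)
    (hcont : ContinuousOn H' (Set.Ici 0))
    (hHint : Integrable H μ)
    (hH'int : IntegrableOn (fun r : ℝ => H' r * (μ (Set.Ioi r)).toReal)
      (Set.Ioi 0)) :
    (∫ x, H x ∂μ)
      = H 0 + (1 / π) *
          ∫ r in Set.Ioi (0 : ℝ),
            H' r * ∫ x, (Complex.log (1 - (x : ℂ) / (r : ℂ))).im ∂μ := by
  -- Step A: the inner integral equals `π · μ(Ioi r)` for `r > 0`.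
  have hinner : ∀ r ∈ Set.Ioi (0:ℝ),
      (∫ x, (Complex.log (1 - (x : ℂ) / (r : ℂ))).im ∂μ)
        = π * (μ (Set.Ioi r)).toReal := by
    intro r hr
    rw [Set.mem_Ioi] at hr
    have : (fun x : ℝ => (Complex.log (1 - (x : ℂ) / (r : ℂ))).im)
        = Set.indicator (Set.Ioi r) (fun _ => π) := by
      funext x
      have hcast : (1 - (x : ℂ) / (r : ℂ)) = ((1 - x / r : ℝ) : ℂ) := by push_cast; ring
      rw [hcast, Complex.log_im]
      by_cases hx : r < x
      · have hneg : (1 - x / r : ℝ) < 0 := by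
          rw [sub_neg]
          exact (one_lt_div hr).mpr hx
        rw [Complex.arg_ofReal_of_neg hneg, Set.indicator_of_mem (Set.mem_Ioi.mpr hx)]
      · have hnn : (0:ℝ) ≤ 1 - x / r := by
          rw [sub_nonneg]
          exact (div_le_one hr).mpr (not_lt.mp hx)
        rw [Complex.arg_ofReal_of_nonneg hnn, Set.indicator_of_notMem (by simpa using hx)]
    rw [this, integral_indicator_const _ measurableSet_Ioi, smul_eq_mul, mul_comm, measureReal_def]
  -- Step B : layer-cake / FTC + Fubini identity.
  have hae : ∀ᵐ x ∂μ, 0 ≤ x := by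
    rw [ae_iff]
    convert hsupp using 2
    ext x; simp
  set F : ℝ × ℝ → ℝ := fun p => H' p.1 * Set.indicator (Set.Ioi p.1) (fun _ => (1:ℝ)) p.2
    with hF
  have hFm : AEStronglyMeasurable F ((volume.restrict (Set.Ioi 0)).prod μ) := by
    have h1 : AEStronglyMeasurable (fun p : ℝ × ℝ => H' p.1)
        ((volume.restrict (Set.Ioi 0)).prod μ) :=
      ((hcont.mono (Set.Ioi_subset_Ici le_rfl)).aemeasurable
        measurableSet_Ioi).aestronglyMeasurable.comp_fst
    have h2 : AEStronglyMeasurable (fun p : ℝ × ℝ =>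
        Set.indicator (Set.Ioi p.1) (fun _ => (1:ℝ)) p.2)
        ((volume.restrict (Set.Ioi 0)).prod μ) := by
      have : (fun p : ℝ × ℝ => Set.indicator (Set.Ioi p.1) (fun _ => (1:ℝ)) p.2)
          = Set.indicator {p : ℝ × ℝ | p.1 < p.2} (fun _ => (1:ℝ)) := by
        funext p
        simp [Set.indicator_apply]
      rw [this]
      exact ((measurable_const.indicator
        (measurableSet_lt measurable_fst measurable_snd))).aestronglyMeasurable
    exact h1.mul h2
  have hFint : Integrable F ((volume.restrict (Set.Ioi 0)).prod μ) := by
    rw [integrable_prod_iff hFm]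
    constructor
    · exact ae_of_all _ fun r =>
        (((integrable_const (1:ℝ)).indicator measurableSet_Ioi).const_mul (H' r) :
          Integrable (fun x => H' r * Set.indicator (Set.Ioi r) (fun _ => (1:ℝ)) x) μ)
    · have : (fun r => ∫ x, ‖F (r, x)‖ ∂μ)
          = fun r => ‖H' r * (μ (Set.Ioi r)).toReal‖ := by
        funext r
        have : (fun x => ‖F (r, x)‖)
            = fun x => ‖H' r‖ * Set.indicator (Set.Ioi r) (fun _ => (1:ℝ)) x := by
          funext x
          by_cases h : r < x
          · simp [hF, Set.indicator_of_mem (Set.mem_Ioi.mpr h), abs_mul]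
          · simp [hF, Set.indicator_of_notMem (by simpa using h : x ∉ Set.Ioi r)]
        rw [this, integral_const_mul, integral_indicator_const _ measurableSet_Ioi,
          smul_eq_mul, mul_one, norm_mul, measureReal_def]
        congr 1
        rw [Real.norm_eq_abs, abs_of_nonneg ENNReal.toReal_nonneg]
      rw [this]
      exact hH'int.norm
  have hinnerF : ∀ r : ℝ, (∫ x, F (r, x) ∂μ) = H' r * (μ (Set.Ioi r)).toReal := by
    intro r
    simp only [hF]
    rw [integral_const_mul, integral_indicator_const _ measurableSet_Ioi, smul_eq_mul, mul_one,
      measureReal_def]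
  have hFTC : ∀ x : ℝ, 0 ≤ x → H x = H 0 + ∫ r in Set.Ioi (0:ℝ), F (r, x) := by
    intro x hx
    have hsub : Set.Icc (0:ℝ) x ⊆ Set.Ici 0 := Set.Icc_subset_Ici_self
    have hHc : ContinuousOn H (Set.Icc 0 x) := fun y hy =>
      ((hderiv y (hsub hy)).continuousWithinAt).mono hsub
    have hd : ∀ y ∈ Set.Ioo (0:ℝ) x, HasDerivWithinAt H (H' y) (Set.Ioi y) y := fun y hy =>
      (hderiv y (le_of_lt hy.1)).mono fun z hz => le_of_lt (lt_of_le_of_lt hy.1.le hz)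
    have hint : IntervalIntegrable H' volume 0 x :=
      (hcont.mono (by rw [Set.uIcc_of_le hx]; exact hsub)).intervalIntegrable
    have h1 : ∫ r in (0:ℝ)..x, H' r = H x - H 0 :=
      intervalIntegral.integral_eq_sub_of_hasDeriv_right_of_le hx hHc hd hint
    have h2 : ∫ r in Set.Ioi (0:ℝ), F (r, x) = ∫ r in (0:ℝ)..x, H' r := by
      rw [intervalIntegral.integral_of_le hx, integral_Ioc_eq_integral_Ioo]
      have : ∫ r in Set.Ioi (0:ℝ), F (r, x)
          = ∫ r in Set.Ioi (0:ℝ), Set.indicator (Set.Ioo 0 x) H' r := by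
        refine setIntegral_congr_fun measurableSet_Ioi fun r hr => ?_
        rw [Set.mem_Ioi] at hr
        by_cases h : r < x
        · rw [Set.indicator_of_mem (Set.mem_Ioo.mpr ⟨hr, h⟩)]
          simp [hF, Set.indicator_of_mem (Set.mem_Ioi.mpr h)]
        · rw [Set.indicator_of_notMem (by simp [h])]
          simp [hF, Set.indicator_of_notMem (by simpa using h : x ∉ Set.Ioi r)]
      rw [this, integral_indicator measurableSet_Ioo, Measure.restrict_restrict measurableSet_Ioo]
      congr 1
      rw [Set.inter_eq_left.mpr fun y hy => hy.1]
    linarith [h1, h2]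
  have stepB : (∫ x, H x ∂μ)
      = H 0 + ∫ r in Set.Ioi (0:ℝ), H' r * (μ (Set.Ioi r)).toReal := by
    calc (∫ x, H x ∂μ) = ∫ x, (H 0 + ∫ r in Set.Ioi (0:ℝ), F (r, x)) ∂μ :=
          integral_congr_ae (hae.mono fun x hx => hFTC x hx)
      _ = H 0 + ∫ x, (∫ r in Set.Ioi (0:ℝ), F (r, x)) ∂μ := by
          rw [integral_add (integrable_const _) hFint.integral_prod_right]
          simp
      _ = H 0 + ∫ r in Set.Ioi (0:ℝ), ∫ x, F (r, x) ∂μ := by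
          have hFint' : Integrable (Function.uncurry fun r x => F (r, x))
              ((volume.restrict (Set.Ioi 0)).prod μ) := hFint
          rw [integral_integral_swap hFint']
      _ = H 0 + ∫ r in Set.Ioi (0:ℝ), H' r * (μ (Set.Ioi r)).toReal := by
          simp_rw [hinnerF]
  -- Combine.
  have hrhs : ∫ r in Set.Ioi (0:ℝ),
      H' r * ∫ x, (Complex.log (1 - (x : ℂ) / (r : ℂ))).im ∂μ
      = π * ∫ r in Set.Ioi (0:ℝ), H' r * (μ (Set.Ioi r)).toReal := by
    rw [← integral_const_mul]
    refine setIntegral_congr_fun measurableSet_Ioi fun r hr => ?_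
    rw [hinner r hr]
    ring
  rw [stepB, hrhs, ← mul_assoc, one_div, inv_mul_cancel₀ Real.pi_ne_zero, one_mul]
end

section
/- Let a > 0, b > 0 and γ̄ > 0. For an exponentially distributed SNR with mean γ̄ (Rayleigh fading), the average of the upper incomplete Gamma function satisfies ∫₀^∞ (1/γ̄) e^{−x/γ̄} · Γ(b, a x) dx = Γ(b) · (1 − (aγ̄/(1 + aγ̄))^{b}), where Γ(b, y) = ∫_y^∞ t^{b−1} e^{−t} dt is the upper incomplete Gamma function and Γ(b) = Γ(b, 0). Consequently the average bit error rate of Wojnar's unified binary modulation scheme over Rayleigh fading is E_avg(γ̄) = (1/2) − (1/2)·(aγ̄/(1+aγ̄))^{b}. -/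
open MeasureTheory Real

/-- The upper incomplete Gamma function `Γ(b, y) = ∫_y^∞ t^{b−1} e^{−t} dt`. -/
noncomputable def upperIncGamma (b y : ℝ) : ℝ :=
  ∫ t in Set.Ioi y, t ^ (b - 1) * Real.exp (-t)

section Aux

open Set Filter


lemma f0_integrable {b : ℝ} (hb : 0 < b) :
    IntegrableOn (fun t : ℝ => t ^ (b - 1) * Real.exp (-t)) (Ioi 0) :=
  (Real.GammaIntegral_convergent hb).congr_fun (fun x _ => mul_comm _ _) measurableSet_Ioi

lemma uig_zero {b : ℝ} (hb : 0 < b) : upperIncGamma b 0 = Real.Gamma b := by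
  rw [Real.Gamma_eq_integral hb]
  exact setIntegral_congr_fun measurableSet_Ioi fun t _ => mul_comm _ _

lemma uig_nonneg {b y : ℝ} (hy : 0 ≤ y) : 0 ≤ upperIncGamma b y :=
  setIntegral_nonneg measurableSet_Ioi fun t ht =>
    mul_nonneg (Real.rpow_nonneg (hy.trans ht.le) _) (Real.exp_nonneg _)

lemma uig_le {b y : ℝ} (hb : 0 < b) (hy : 0 ≤ y) : upperIncGamma b y ≤ Real.Gamma b := by
  rw [← uig_zero hb]
  refine setIntegral_mono_set (f0_integrable hb) ?_ ((Ioi_subset_Ioi hy).eventuallyLE)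
  refine (ae_restrict_iff' measurableSet_Ioi).mpr (ae_of_all _ fun t ht => ?_)
  exact mul_nonneg (Real.rpow_nonneg (le_of_lt ht) _) (Real.exp_nonneg _)

lemma uig_split {b y : ℝ} (hb : 0 < b) (hy : 0 ≤ y) :
    upperIncGamma b y = Real.Gamma b - ∫ t in Ioc 0 y, t ^ (b - 1) * Real.exp (-t) := by
  have h := setIntegral_union (Set.Ioc_disjoint_Ioi le_rfl) measurableSet_Ioi
    ((f0_integrable hb).mono_set Ioc_subset_Ioi_self)
    ((f0_integrable hb).mono_set (Ioi_subset_Ioi hy))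
    (f := fun t : ℝ => t ^ (b - 1) * Real.exp (-t)) (μ := volume)
  rw [Ioc_union_Ioi_eq_Ioi hy] at h
  have h0 : upperIncGamma b 0 = Real.Gamma b := uig_zero hb
  unfold upperIncGamma at h0 ⊢
  linarith

lemma uig_hasDerivAt {b y : ℝ} (hb : 0 < b) (hy : 0 < y) :
    HasDerivAt (upperIncGamma b) (-(y ^ (b - 1) * Real.exp (-y))) y := by
  set f0 : ℝ → ℝ := fun t => t ^ (b - 1) * Real.exp (-t) with hf0
  have hcont : ContinuousAt f0 y :=
    ((Real.continuousAt_rpow_const y (b - 1) (Or.inl hy.ne')).mul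
      ((Real.continuous_exp.comp continuous_neg).continuousAt))
  have hmeas : StronglyMeasurableAtFilter f0 (nhds y) := by
    refine ⟨univ, univ_mem, ?_⟩
    have : Measurable f0 := by rw [hf0]; fun_prop
    exact this.aestronglyMeasurable
  have hii : IntervalIntegrable f0 volume 0 y :=
    (intervalIntegrable_iff_integrableOn_Ioc_of_le hy.le).mpr
      ((f0_integrable hb).mono_set Ioc_subset_Ioi_self)
  have H := intervalIntegral.integral_hasDerivAt_right hii hmeas hcont
  have H2 : HasDerivAt (fun u => Real.Gamma b - ∫ t in (0:ℝ)..u, f0 t) (-(f0 y)) y := by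
    exact ((hasDerivAt_const y (Real.Gamma b)).sub H).congr_deriv (by simp)
  refine H2.congr_of_eventuallyEq ?_
  filter_upwards [Ioi_mem_nhds hy] with u hu
  rw [intervalIntegral.integral_of_le (le_of_lt hu)]
  exact uig_split hb hu.le

lemma uig_cwa {a b : ℝ} (ha : 0 < a) (hb : 0 < b) :
    ContinuousWithinAt (fun x : ℝ => upperIncGamma b (a * x)) (Ici 0) 0 := by
  set f0 : ℝ → ℝ := fun t => t ^ (b - 1) * Real.exp (-t) with hf0
  have hIcc : IntegrableOn f0 (Icc 0 a) :=
    (integrableOn_Icc_iff_integrableOn_Ioc).mpr ((f0_integrable hb).mono_set Ioc_subset_Ioi_self)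
  have hP : ContinuousOn (fun u => ∫ t in Ioc 0 u, f0 t) (Icc 0 a) :=
    intervalIntegral.continuousOn_primitive hIcc
  have h1 : ContinuousWithinAt (fun u => ∫ t in Ioc 0 u, f0 t) (Icc 0 a) 0 :=
    hP 0 ⟨le_rfl, ha.le⟩
  have h2 : ContinuousWithinAt (fun x : ℝ => ∫ t in Ioc 0 (a * x), f0 t) (Icc 0 1) 0 := by
    have hm : MapsTo (fun x : ℝ => a * x) (Icc 0 1) (Icc 0 a) := by
      intro x hx
      exact ⟨mul_nonneg ha.le hx.1, by simpa using mul_le_mul_of_nonneg_left hx.2 ha.le⟩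
    have h1' : ContinuousWithinAt (fun u => ∫ t in Ioc 0 u, f0 t) (Icc 0 a)
        ((fun x : ℝ => a * x) 0) := by simpa using h1
    exact
      h1'.comp ((continuous_const.mul continuous_id).continuousWithinAt) hm
  have h3 : ContinuousWithinAt (fun x : ℝ => ∫ t in Ioc 0 (a * x), f0 t) (Ici 0) 0 := by
    refine h2.mono_of_mem_nhdsWithin ?_
    have : Icc (0:ℝ) 1 = Ici 0 ∩ Iic 1 := (Ici_inter_Iic).symm
    rw [this]
    exact inter_mem_nhdsWithin _ (Iic_mem_nhds zero_lt_one)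
  refine (((continuousWithinAt_const).sub h3).congr
    (fun x hx => uig_split hb (mul_nonneg ha.le hx)) ?_)
  simp only [mul_zero]
  exact (uig_split hb le_rfl).trans (by simp)

theorem uig_key (a b γbar : ℝ) (ha : 0 < a) (hb : 0 < b) (hγ : 0 < γbar) :
    (∫ x in Set.Ioi (0 : ℝ),
        (1 / γbar) * Real.exp (-x / γbar) * upperIncGamma b (a * x))
      = Real.Gamma b * (1 - (a * γbar / (1 + a * γbar)) ^ b) := by
  set c : ℝ := a + 1 / γbar with hc_def
  have hc : 0 < c := by positivity
  set E : ℝ → ℝ := fun x => Real.exp (-x / γbar) with hE_def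
  set U : ℝ → ℝ := upperIncGamma b with hU_def
  set f : ℝ → ℝ := fun x => (1 / γbar) * E x * U (a * x) with hf_def
  set h : ℝ → ℝ := fun x => a * (E x * ((a * x) ^ (b - 1) * Real.exp (-(a * x)))) with hh_def
  set G : ℝ → ℝ := fun x => -(E x * U (a * x)) with hG_def
  -- derivatives
  have hE : ∀ x : ℝ, HasDerivAt E (-(1 / γbar) * E x) x := by
    intro x
    have h1 : HasDerivAt (fun x : ℝ => -x / γbar) (-(1 / γbar)) x := by
      simpa [neg_div] using ((hasDerivAt_id x).neg.div_const γbar)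
    have := (Real.hasDerivAt_exp (-x / γbar)).comp x h1
    simpa [hE_def, mul_comm, Function.comp_def] using this
  have hV : ∀ x : ℝ, 0 < x →
      HasDerivAt (fun x : ℝ => U (a * x)) (-((a * x) ^ (b - 1) * Real.exp (-(a * x))) * a) x := by
    intro x hx
    have hin : HasDerivAt (fun y : ℝ => a * y) a x := by
      simpa using (hasDerivAt_id x).const_mul a
    exact HasDerivAt.comp x (uig_hasDerivAt hb (mul_pos ha hx)) hin
  have hG : ∀ x ∈ Ioi (0 : ℝ), HasDerivAt G (f x + h x) x := by
    intro x hx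
    have := ((hE x).mul (hV x hx)).neg
    refine this.congr_deriv ?_
    simp only [hf_def, hh_def]
    ring
  -- continuity at 0
  have hcont : ContinuousWithinAt G (Ici 0) 0 := by
    have hEc : Continuous E := by rw [hE_def]; fun_prop
    exact ((hEc.continuousWithinAt).mul (uig_cwa ha hb)).neg
  -- integrability of h
  have base : IntegrableOn (fun x : ℝ => x ^ (b - 1) * Real.exp (-(c * x))) (Ioi 0) := by
    have := integrableOn_rpow_mul_exp_neg_mul_rpow (s := b - 1) (p := 1) (by linarith) one_pos hc
    exact this.congr_fun (fun x _ => by simp only [Real.rpow_one, neg_mul]) measurableSet_Ioi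
  have heq : EqOn h (fun x : ℝ => a ^ b * (x ^ (b - 1) * Real.exp (-(c * x)))) (Ioi 0) := by
    intro x hx
    have hx0 : (0 : ℝ) < x := hx
    have e1 : (a * x) ^ (b - 1) = a ^ (b - 1) * x ^ (b - 1) := Real.mul_rpow ha.le hx0.le
    have e2 : Real.exp (-x / γbar) * Real.exp (-(a * x)) = Real.exp (-(c * x)) := by
      rw [← Real.exp_add]
      congr 1
      rw [hc_def]
      field_simp
      ring
    have e3 : a * a ^ (b - 1) = a ^ b := by
      nth_rewrite 1 [← Real.rpow_one a]
      rw [← Real.rpow_add ha]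
      norm_num
    calc h x = (a * a ^ (b - 1)) * (x ^ (b - 1) * (Real.exp (-x / γbar) * Real.exp (-(a * x)))) := by
          simp only [hh_def, hE_def, e1]; ring
      _ = a ^ b * (x ^ (b - 1) * Real.exp (-(c * x))) := by rw [e2, e3]
  have h_int : IntegrableOn h (Ioi 0) :=
    IntegrableOn.congr_fun (base.const_mul (a ^ b)) (fun x hx => (heq hx).symm) measurableSet_Ioi
  -- integrability of f
  have f_int : IntegrableOn f (Ioi 0) := by
    have hVc : ContinuousOn (fun x : ℝ => U (a * x)) (Ioi 0) :=
      fun x hx => ((hV x hx).continuousAt).continuousWithinAt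
    have hfc : ContinuousOn f (Ioi 0) := by
      refine ContinuousOn.mul ?_ hVc
      have hEc : Continuous E := by rw [hE_def]; fun_prop
      exact (continuous_const.mul hEc).continuousOn
    have hbound : IntegrableOn (fun x : ℝ => (1 / γbar) * Real.Gamma b *
        Real.exp (-(1 / γbar) * x)) (Ioi 0) :=
      (exp_neg_integrableOn_Ioi 0 (by positivity)).const_mul _
    refine Integrable.mono' hbound (hfc.aestronglyMeasurable measurableSet_Ioi) ?_
    refine (ae_restrict_iff' measurableSet_Ioi).mpr (ae_of_all _ fun x hx => ?_)
    have hx0 : (0 : ℝ) < x := hx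
    have hUn : 0 ≤ U (a * x) := uig_nonneg (by positivity)
    have hfx : 0 ≤ f x := by
      simp only [hf_def, hE_def]
      positivity
    rw [Real.norm_eq_abs, abs_of_nonneg hfx]
    calc f x ≤ (1 / γbar) * E x * Real.Gamma b := by
          refine mul_le_mul_of_nonneg_left (uig_le hb (by positivity)) ?_
          simp only [hE_def]; positivity
      _ = (1 / γbar) * Real.Gamma b * Real.exp (-(1 / γbar) * x) := by
          simp only [hE_def]
          rw [show -x / γbar = -(1 / γbar) * x by ring]
          ring
  -- limit of G at infinity
  have htend : Tendsto G atTop (nhds 0) := by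
    have h1 : Tendsto (fun x : ℝ => -x / γbar) atTop atBot := by
      have h2 : Tendsto (fun x : ℝ => x / γbar) atTop atTop :=
        Tendsto.atTop_div_const hγ tendsto_id
      simpa [neg_div] using tendsto_neg_atBot_iff.mpr h2
    have hexp : Tendsto (fun x : ℝ => E x * Real.Gamma b) atTop (nhds 0) := by
      have := (Real.tendsto_exp_atBot.comp h1).mul_const (Real.Gamma b)
      simpa [hE_def, Function.comp] using this
    refine tendsto_of_tendsto_of_tendsto_of_le_of_le' (by simpa using hexp.neg)
      (tendsto_const_nhds : Tendsto (fun _ : ℝ => (0 : ℝ)) atTop (nhds 0)) ?_ ?_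
    · filter_upwards [eventually_gt_atTop (0 : ℝ)] with x hx
      have hUn : U (a * x) ≤ Real.Gamma b := uig_le hb (by positivity)
      have hEn : 0 ≤ E x := by simp only [hE_def]; positivity
      simp only [hG_def, neg_le_neg_iff]
      exact mul_le_mul_of_nonneg_left hUn hEn
    · filter_upwards [eventually_gt_atTop (0 : ℝ)] with x hx
      have hUn : 0 ≤ U (a * x) := uig_nonneg (by positivity)
      have hEn : 0 ≤ E x := by simp only [hE_def]; positivity
      simp only [hG_def, neg_nonpos, Left.neg_nonpos_iff]
      exact mul_nonneg hEn hUn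
  -- FTC
  have hFTC : ∫ x in Ioi (0 : ℝ), (f x + h x) = 0 - G 0 :=
    integral_Ioi_of_hasDerivAt_of_tendsto hcont hG (f_int.add h_int) htend
  have hG0 : G 0 = -Real.Gamma b := by
    simp [hG_def, hE_def, hU_def, uig_zero hb]
  have hadd : (∫ x in Ioi (0 : ℝ), (f x + h x))
      = (∫ x in Ioi (0 : ℝ), f x) + ∫ x in Ioi (0 : ℝ), h x :=
    integral_add f_int h_int
  have hint2 : ∫ x in Ioi (0 : ℝ), h x = a ^ b * ((1 / c) ^ b * Real.Gamma b) := by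
    rw [setIntegral_congr_fun measurableSet_Ioi heq, MeasureTheory.integral_const_mul,
      integral_rpow_mul_exp_neg_mul_Ioi hb hc]
  have hr : a ^ b * (1 / c) ^ b = (a * γbar / (1 + a * γbar)) ^ b := by
    rw [← Real.mul_rpow ha.le (by positivity)]
    congr 1
    rw [hc_def]
    field_simp
    ring
  have hf_val : (∫ x in Ioi (0 : ℝ), f x)
      = Real.Gamma b - (a * γbar / (1 + a * γbar)) ^ b * Real.Gamma b := by
    have := hFTC
    rw [hadd, hG0, hint2] at this
    rw [← hr]
    linarith
  show (∫ x in Ioi (0 : ℝ), f x) = _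
  rw [hf_val]
  ring


end Aux

/-- **Average bit error rate of Wojnar's unified binary modulation over
Rayleigh fading.**  For `a, b, γ̄ > 0` and an exponentially distributed SNR
with mean `γ̄`,
`∫₀^∞ (1/γ̄) e^{−x/γ̄} Γ(b, ax) dx = Γ(b) (1 − (aγ̄/(1+aγ̄))^b)`,
and consequently `E_avg(γ̄) = 1/2 − (1/2)(aγ̄/(1+aγ̄))^b`. -/
theorem aber_rayleigh_wojnar (a b γbar : ℝ) (ha : 0 < a) (hb : 0 < b)
    (hγ : 0 < γbar) :
    (∫ x in Set.Ioi (0 : ℝ),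
        (1 / γbar) * Real.exp (-x / γbar) * upperIncGamma b (a * x))
      = Real.Gamma b * (1 - (a * γbar / (1 + a * γbar)) ^ b)
    ∧ (∫ x in Set.Ioi (0 : ℝ),
        (1 / γbar) * Real.exp (-x / γbar) *
          (upperIncGamma b (a * x) / (2 * Real.Gamma b)))
      = 1 / 2 - (1 / 2) * (a * γbar / (1 + a * γbar)) ^ b := by
  have hkey := uig_key a b γbar ha hb hγ
  refine ⟨hkey, ?_⟩
  have hΓ : Real.Gamma b ≠ 0 := (Real.Gamma_pos_of_pos hb).ne'
  have h2 : (∫ x in Set.Ioi (0 : ℝ),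
      (1 / γbar) * Real.exp (-x / γbar) * (upperIncGamma b (a * x) / (2 * Real.Gamma b)))
      = (∫ x in Set.Ioi (0 : ℝ),
        (1 / γbar) * Real.exp (-x / γbar) * upperIncGamma b (a * x)) / (2 * Real.Gamma b) := by
    rw [← MeasureTheory.integral_div]
    congr 1
    funext x
    ring
  rw [h2, hkey]
  field_simp
end
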